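/- arXiv:2402.04530 — 10 statements merged into one kernel-verified Lean document; each statement's English description precedes it below -/
import Mathlib

section
/- Let X be an n×p real matrix of rank p and let P be an n×n symmetric positive definite matrix (so XᵀPX and XᵀX are invertible). Then (XᵀPX)⁻¹XᵀP²X(XᵀPX)⁻¹ − (XᵀX)⁻¹ is positive semidefinite. Consequently, for any η² > 0 and any Loewner-nondecreasing function Φ, the maximum over the class {C positive semidefinite : C ⪯ η²·I_n} of Φ((XᵀPX)⁻¹XᵀPCPX(XᵀPX)⁻¹) equals Φ(η²·(XᵀPX)⁻¹XᵀP²X(XᵀPX)⁻¹), and this maximum is at least Φ(η²·(XᵀX)⁻¹), its value at P = I_n; i.e., ordinary least squares is minimax among generalized least squares estimates. -/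
open Matrix

-- helper: real psd conjugation with transpose
lemma psd_conjT {n m : ℕ} {M : Matrix (Fin n) (Fin n) ℝ} (hM : M.PosSemidef)
    (B : Matrix (Fin n) (Fin m) ℝ) : (Bᵀ * M * B).PosSemidef := by
  simpa [conjTranspose_eq_transpose_of_trivial] using hM.conjTranspose_mul_mul_same B

lemma psd_smul {m : ℕ} {M : Matrix (Fin m) (Fin m) ℝ} (hM : M.PosSemidef)
    {c : ℝ} (hc : 0 ≤ c) : (c • M).PosSemidef := by
  refine PosSemidef.of_dotProduct_mulVec_nonneg ?_ ?_
  · show _ = _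
    rw [conjTranspose_smul, star_trivial, hM.1.eq]
  · intro x
    rw [smul_mulVec, dotProduct_smul]
    exact mul_nonneg hc (hM.dotProduct_mulVec_nonneg x)

lemma posDef_conj {n p : ℕ} {P : Matrix (Fin n) (Fin n) ℝ} (hP : P.PosDef)
    (X : Matrix (Fin n) (Fin p) ℝ) (hinj : ∀ v, X *ᵥ v = 0 → v = 0) :
    (Xᵀ * P * X).PosDef := by
  refine PosDef.of_dotProduct_mulVec_pos ?_ ?_
  · have h := Matrix.isHermitian_conjTranspose_mul_mul X hP.1
    simpa [conjTranspose_eq_transpose_of_trivial] using h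
  · intro x hx
    have hx' : X *ᵥ x ≠ 0 := fun h => hx (hinj x h)
    have h2 := hP.dotProduct_mulVec_pos hx'
    simpa [star_trivial, ← mulVec_mulVec, dotProduct_mulVec, vecMul_transpose] using h2

/-- For `X : n × p` of rank `p` and `P ≻ 0`, the matrix
`(XᵀPX)⁻¹XᵀP²X(XᵀPX)⁻¹ − (XᵀX)⁻¹` is psd; consequently for any `η² > 0` and any
Loewner-nondecreasing `Φ`, the maximum over `{C ⪰ 0 : C ⪯ η²·I}` of
`Φ((XᵀPX)⁻¹XᵀPCPX(XᵀPX)⁻¹)` equals `Φ(η²·(XᵀPX)⁻¹XᵀP²X(XᵀPX)⁻¹)`, which is at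
least `Φ(η²·(XᵀX)⁻¹)`, its value at `P = I`: OLS is minimax among GLS estimates. -/
theorem ols_minimax_correct_response (n p : ℕ)
    (X : Matrix (Fin n) (Fin p) ℝ) (hX : X.rank = p)
    (P : Matrix (Fin n) (Fin n) ℝ) (hP : P.PosDef) :
    ((Xᵀ * P * X)⁻¹ * (Xᵀ * P * P * X) * (Xᵀ * P * X)⁻¹ - (Xᵀ * X)⁻¹).PosSemidef ∧
    ∀ η2 : ℝ, 0 < η2 →
      ∀ Φ : Matrix (Fin p) (Fin p) ℝ → ℝ,
        (∀ A B : Matrix (Fin p) (Fin p) ℝ,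
          A.PosSemidef → B.PosSemidef → (B - A).PosSemidef → Φ A ≤ Φ B) →
        IsGreatest {r : ℝ | ∃ C : Matrix (Fin n) (Fin n) ℝ, C.PosSemidef ∧
            (η2 • (1 : Matrix (Fin n) (Fin n) ℝ) - C).PosSemidef ∧
            r = Φ ((Xᵀ * P * X)⁻¹ * (Xᵀ * P * C * P * X) * (Xᵀ * P * X)⁻¹)}
          (Φ (η2 • ((Xᵀ * P * X)⁻¹ * (Xᵀ * P * P * X) * (Xᵀ * P * X)⁻¹))) ∧
        Φ (η2 • (Xᵀ * X)⁻¹)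
          ≤ Φ (η2 • ((Xᵀ * P * X)⁻¹ * (Xᵀ * P * P * X) * (Xᵀ * P * X)⁻¹)) := by
  -- injectivity of X
  have hinj : ∀ v : Fin p → ℝ, X *ᵥ v = 0 → v = 0 := by
    have hker : LinearMap.ker X.mulVecLin = ⊥ := by
      have h1 := X.mulVecLin.finrank_range_add_finrank_ker
      rw [Matrix.rank] at hX
      rw [hX, Module.finrank_fin_fun] at h1
      exact Submodule.finrank_eq_zero.mp (by omega)
    intro v hv
    exact (LinearMap.ker_eq_bot.mp hker) (by simpa using hv)
  have hA : (Xᵀ * P * X).PosDef := posDef_conj hP X hinj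
  have hS : (Xᵀ * X).PosDef := by
    have := posDef_conj Matrix.PosDef.one X hinj
    simpa using this
  set A := Xᵀ * P * X with hAdef
  set S := Xᵀ * X with hSdef
  have hPT : Pᵀ = P := by
    have := hP.1.eq; rwa [conjTranspose_eq_transpose_of_trivial] at this
  have hAiT : (A⁻¹)ᵀ = A⁻¹ := by
    have := hA.inv.1.eq; rwa [conjTranspose_eq_transpose_of_trivial] at this
  have hSiT : (S⁻¹)ᵀ = S⁻¹ := by
    have := hS.inv.1.eq; rwa [conjTranspose_eq_transpose_of_trivial] at this
  have hAi : A * A⁻¹ = 1 := Matrix.mul_nonsing_inv A hA.det_pos.ne'.isUnit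
  have hAi' : A⁻¹ * A = 1 := Matrix.nonsing_inv_mul A hA.det_pos.ne'.isUnit
  have hSi : S * S⁻¹ = 1 := Matrix.mul_nonsing_inv S hS.det_pos.ne'.isUnit
  -- cancellation lemmas in right-assoc form
  have k3 : ∀ {q : ℕ} (W : Matrix (Fin p) (Fin q) ℝ),
      A⁻¹ * (Xᵀ * (P * (X * W))) = W := by
    intro q W
    have := congrArg (fun M => M * W) hAi'
    simpa only [hAdef, Matrix.mul_assoc, Matrix.one_mul] using this
  have k4' : Xᵀ * (P * (X * A⁻¹)) = 1 := by
    simpa only [hAdef, Matrix.mul_assoc] using hAi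
  have kS1 : ∀ {q : ℕ} (W : Matrix (Fin p) (Fin q) ℝ),
      Xᵀ * (X * (S⁻¹ * W)) = W := by
    intro q W
    have := congrArg (fun M => M * W) hSi
    simpa only [hSdef, Matrix.mul_assoc, Matrix.one_mul] using this
  -- the projection Q
  set Q : Matrix (Fin n) (Fin n) ℝ := 1 - X * S⁻¹ * Xᵀ with hQdef
  have hQT : Qᵀ = Q := by
    simp [hQdef, transpose_mul, hSiT, Matrix.mul_assoc]
  have hQQ : Q * Q = Q := by
    rw [hQdef]
    simp only [Matrix.sub_mul, Matrix.mul_sub, Matrix.one_mul, Matrix.mul_one]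
    have h5 : X * S⁻¹ * Xᵀ * (X * S⁻¹ * Xᵀ) = X * S⁻¹ * Xᵀ := by
      simp only [Matrix.mul_assoc]
      rw [show Xᵀ * (X * (S⁻¹ * Xᵀ)) = Xᵀ from kS1 Xᵀ]
    rw [h5]
    abel
  have hQpsd : Q.PosSemidef := by
    have h := posSemidef_conjTranspose_mul_self Q
    rwa [conjTranspose_eq_transpose_of_trivial, hQT, hQQ] at h
  -- conjugation identities with K = P * X * A⁻¹, written explicitly
  have key : ∀ C : Matrix (Fin n) (Fin n) ℝ, C.PosSemidef →
      (A⁻¹ * (Xᵀ * P * C * P * X) * A⁻¹).PosSemidef := by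
    intro C hC
    have h := psd_conjT hC (P * X * A⁻¹)
    rwa [show (P * X * A⁻¹)ᵀ * C * (P * X * A⁻¹)
        = A⁻¹ * (Xᵀ * P * C * P * X) * A⁻¹ by
      simp only [transpose_mul, hAiT, hPT, Matrix.mul_assoc]] at h
  have key2 : ∀ C D : Matrix (Fin n) (Fin n) ℝ, (D - C).PosSemidef →
      (A⁻¹ * (Xᵀ * P * D * P * X) * A⁻¹
        - A⁻¹ * (Xᵀ * P * C * P * X) * A⁻¹).PosSemidef := by
    intro C D h
    have h2 := psd_conjT h (P * X * A⁻¹)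
    rwa [show (P * X * A⁻¹)ᵀ * (D - C) * (P * X * A⁻¹)
        = A⁻¹ * (Xᵀ * P * D * P * X) * A⁻¹
          - A⁻¹ * (Xᵀ * P * C * P * X) * A⁻¹ by
      simp only [Matrix.mul_sub, Matrix.sub_mul, transpose_mul, hAiT, hPT,
        Matrix.mul_assoc]] at h2
  -- part 1
  have e1 : (P * X * A⁻¹)ᵀ * Q * (P * X * A⁻¹)
      = A⁻¹ * (Xᵀ * P * P * X) * A⁻¹ - S⁻¹ := by
    rw [hQdef, Matrix.mul_sub, Matrix.sub_mul, Matrix.mul_one]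
    congr 1
    · simp only [transpose_mul, hAiT, hPT, Matrix.mul_assoc]
    · simp only [transpose_mul, hAiT, hPT, Matrix.mul_assoc]
      rw [k4', Matrix.mul_one, k3]
  have part1 : (A⁻¹ * (Xᵀ * P * P * X) * A⁻¹ - S⁻¹).PosSemidef := by
    rw [← e1]; exact psd_conjT hQpsd (P * X * A⁻¹)
  refine ⟨part1, ?_⟩
  intro η2 hη2 Φ hΦ
  have hsmul : ∀ c : ℝ, A⁻¹ * (Xᵀ * P * (c • (1 : Matrix (Fin n) (Fin n) ℝ)) * P * X) * A⁻¹
      = c • (A⁻¹ * (Xᵀ * P * P * X) * A⁻¹) := by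
    intro c
    simp only [Matrix.mul_smul, Matrix.smul_mul, Matrix.mul_one]
  have hη2M1psd : (η2 • (A⁻¹ * (Xᵀ * P * P * X) * A⁻¹)).PosSemidef := by
    rw [← hsmul η2]
    exact key _ (psd_smul Matrix.PosSemidef.one hη2.le)
  constructor
  · constructor
    · refine ⟨η2 • 1, psd_smul Matrix.PosSemidef.one hη2.le,
        by simpa using Matrix.PosSemidef.zero, ?_⟩
      rw [hsmul η2]
    · rintro r ⟨C, hC, hC2, rfl⟩
      have hdiff := key2 C (η2 • 1) hC2
      rw [hsmul η2] at hdiff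
      exact hΦ _ _ (key C hC) hη2M1psd hdiff
  · have hSipsd : (η2 • S⁻¹).PosSemidef := psd_smul hS.inv.posSemidef hη2.le
    have hd : (η2 • (A⁻¹ * (Xᵀ * P * P * X) * A⁻¹) - η2 • S⁻¹).PosSemidef := by
      rw [← smul_sub]
      exact psd_smul part1 hη2.le
    exact hΦ _ _ hSipsd hη2M1psd hd
end

section
/- Let Q be an n×p real matrix with orthonormal columns (QᵀQ = I_p) and let C be an n×n symmetric positive definite matrix. Then det(QᵀC⁻²Q) ≥ (det(QᵀC⁻¹Q))². Equivalently, the ratio r = det(QᵀC⁻²Q)/det(QᵀC⁻¹Q)² of the maximum loss of the generalized least squares estimate with precision matrix C⁻¹ to that of the ordinary least squares estimate, under determinant loss, is at least 1. -/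
open Matrix

section Aux

variable {m : Type*} [Fintype m] [DecidableEq m]

/-- If `T` is PSD and `1 - T` is PSD, then `det T ≤ 1`. -/
lemma aux_det_le_one {T : Matrix m m ℝ} (hT : T.PosSemidef)
    (h1 : (1 - T).PosSemidef) : T.det ≤ 1 := by
  have hdet : T.det = ∏ i, hT.1.eigenvalues i := by
    simpa using hT.1.det_eq_prod_eigenvalues
  rw [hdet]
  apply Finset.prod_le_one
  · intro i _; exact hT.eigenvalues_nonneg i
  · intro i _
    set v : m → ℝ := ⇑(hT.1.eigenvectorBasis i) with hv
    have hnorm : v ⬝ᵥ v = 1 := by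
      have h1' : ‖hT.1.eigenvectorBasis i‖ = 1 := hT.1.eigenvectorBasis.orthonormal.1 i
      have h2 : (inner ℝ (hT.1.eigenvectorBasis i) (hT.1.eigenvectorBasis i) : ℝ)
          = dotProduct (star v) v := by
        rw [EuclideanSpace.inner_eq_star_dotProduct, dotProduct_comm]
      have h3 : (inner ℝ (hT.1.eigenvectorBasis i) (hT.1.eigenvectorBasis i) : ℝ)
          = ‖hT.1.eigenvectorBasis i‖ ^ 2 := real_inner_self_eq_norm_sq _
      simp only [star_trivial] at h2
      rw [← h2, h3, h1']; norm_num
    have heig : T *ᵥ v = hT.1.eigenvalues i • v := hT.1.mulVec_eigenvectorBasis i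
    have hps := h1.dotProduct_mulVec_nonneg v
    rw [sub_mulVec, one_mulVec, dotProduct_sub, heig, dotProduct_smul, star_trivial,
      hnorm] at hps
    simp only [smul_eq_mul, mul_one] at hps
    linarith

/-- Determinant monotonicity on the Loewner order. -/
lemma aux_det_le_det {A B : Matrix m m ℝ} (hA : A.PosSemidef) (hB : B.PosDef)
    (hBA : (B - A).PosSemidef) : A.det ≤ B.det := by
  obtain ⟨S, hS, hSS⟩ : ∃ S : Matrix m m ℝ, S.PosSemidef ∧ S * S = B := by
    open scoped MatrixOrder in
    exact ⟨CFC.sqrt B, (CFC.sqrt_nonneg B).posSemidef,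
      CFC.sqrt_mul_sqrt_self B hB.posSemidef.nonneg⟩
  have hdetS : S.det * S.det = B.det := by rw [← det_mul, hSS]
  have hdetS_ne : S.det ≠ 0 := by
    intro h
    rw [h, mul_zero] at hdetS
    exact hB.det_pos.ne' hdetS.symm
  have hU : IsUnit S.det := isUnit_iff_ne_zero.mpr hdetS_ne
  have hSinv : S * S⁻¹ = 1 := mul_nonsing_inv _ hU
  have hSinv' : S⁻¹ * S = 1 := nonsing_inv_mul _ hU
  have hSinvH : (S⁻¹)ᴴ = S⁻¹ := hS.1.inv
  set T := S⁻¹ * A * S⁻¹ with hTdef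
  have hT : T.PosSemidef := by
    have := hA.conjTranspose_mul_mul_same S⁻¹
    rwa [hSinvH] at this
  have h1T : (1 - T).PosSemidef := by
    have h := hBA.conjTranspose_mul_mul_same S⁻¹
    rw [hSinvH] at h
    have e : S⁻¹ * (B - A) * S⁻¹ = 1 - T := by
      rw [Matrix.mul_sub, Matrix.sub_mul, hTdef, ← hSS]
      congr 1
      calc S⁻¹ * (S * S) * S⁻¹ = (S⁻¹ * S) * (S * S⁻¹) := by
            simp only [Matrix.mul_assoc]
        _ = 1 := by rw [hSinv', hSinv, Matrix.one_mul]
    rwa [e] at h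
  have hAST : A = S * T * S := by
    rw [hTdef]
    calc A = (S * S⁻¹) * A * (S⁻¹ * S) := by rw [hSinv, hSinv', Matrix.one_mul, Matrix.mul_one]
      _ = S * (S⁻¹ * A * S⁻¹) * S := by simp only [Matrix.mul_assoc]
  have hdetT : T.det ≤ 1 := aux_det_le_one hT h1T
  have hdetT0 : 0 ≤ T.det := by
    exact hT.det_nonneg
  calc A.det = S.det * T.det * S.det := by rw [hAST, det_mul, det_mul]
    _ = B.det * T.det := by rw [← hdetS]; ring
    _ ≤ B.det * 1 := by
        exact mul_le_mul_of_nonneg_left hdetT hB.det_pos.le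
    _ = B.det := mul_one _

/-- Conjugation of a positive definite matrix by a matrix with orthonormal columns. -/
lemma aux_posDef_conj {n p : ℕ} {Q : Matrix (Fin n) (Fin p) ℝ} (hQ : Qᵀ * Q = 1)
    {D : Matrix (Fin n) (Fin n) ℝ} (hD : D.PosDef) : (Qᵀ * D * Q).PosDef := by
  refine Matrix.PosDef.of_dotProduct_mulVec_pos ?_ ?_
  · have := isHermitian_conjTranspose_mul_mul Q hD.1
    rwa [conjTranspose_eq_transpose_of_trivial] at this
  · intro x hx
    have hQx : Q *ᵥ x ≠ 0 := by
      intro h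
      apply hx
      have : Qᵀ *ᵥ (Q *ᵥ x) = x := by rw [mulVec_mulVec, hQ, one_mulVec]
      rw [h, mulVec_zero] at this
      exact this.symm
    have hpos := hD.dotProduct_mulVec_pos hQx
    have key : star x ⬝ᵥ ((Qᵀ * D * Q) *ᵥ x) = star (Q *ᵥ x) ⬝ᵥ (D *ᵥ (Q *ᵥ x)) := by
      simp only [star_trivial, ← mulVec_mulVec]
      rw [dotProduct_mulVec x Qᵀ, vecMul_transpose]
    rwa [key]

/-- For `Q : n × p` with orthonormal columns and `C ≻ 0`,
`det(QᵀC⁻²Q) ≥ (det(QᵀC⁻¹Q))²`; equivalently the ratio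
`det(QᵀC⁻²Q)/det(QᵀC⁻¹Q)²` (GLS-to-OLS ratio of maximum determinant losses)
is at least 1. -/
theorem gls_ols_det_ratio_ge_one (n p : ℕ)
    (Q : Matrix (Fin n) (Fin p) ℝ) (hQ : Qᵀ * Q = 1)
    (C : Matrix (Fin n) (Fin n) ℝ) (hC : C.PosDef) :
    (Qᵀ * C⁻¹ * Q).det ^ 2 ≤ (Qᵀ * (C⁻¹ * C⁻¹) * Q).det ∧
    1 ≤ (Qᵀ * (C⁻¹ * C⁻¹) * Q).det / (Qᵀ * C⁻¹ * Q).det ^ 2 := by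
  have hCi : (C⁻¹).PosDef := hC.inv
  have hCiT : (C⁻¹)ᵀ = C⁻¹ := by
    rw [← conjTranspose_eq_transpose_of_trivial]
    exact hCi.1.eq
  -- C⁻¹ * C⁻¹ is positive definite
  have hCi2 : (C⁻¹ * C⁻¹).PosDef := by
    refine Matrix.PosDef.of_dotProduct_mulVec_pos ?_ ?_
    · show (C⁻¹ * C⁻¹)ᴴ = C⁻¹ * C⁻¹
      rw [conjTranspose_mul, hCi.1.eq]
    · intro x hx
      have hCx : C⁻¹ *ᵥ x ≠ 0 := by
        intro h
        apply hx
        have hUC : IsUnit C.det := hC.isUnit.map detMonoidHom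
        have : C *ᵥ (C⁻¹ *ᵥ x) = x := by
          rw [mulVec_mulVec, mul_nonsing_inv _ hUC, one_mulVec]
        rw [h, mulVec_zero] at this
        exact this.symm
      have key : star x ⬝ᵥ ((C⁻¹ * C⁻¹) *ᵥ x) = (C⁻¹ *ᵥ x) ⬝ᵥ (C⁻¹ *ᵥ x) := by
        rw [star_trivial, ← mulVec_mulVec, dotProduct_mulVec x (C⁻¹), ← mulVec_transpose, hCiT]
      rw [key]
      have hp := dotProduct_self_star_pos_iff.mpr hCx
      rwa [star_trivial] at hp
  set A := Qᵀ * C⁻¹ * Q with hAdef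
  set N := Qᵀ * (C⁻¹ * C⁻¹) * Q with hNdef
  have hApd : A.PosDef := aux_posDef_conj hQ hCi
  have hNpd : N.PosDef := aux_posDef_conj hQ hCi2
  have hAAps : (A * A).PosSemidef := by
    have := posSemidef_conjTranspose_mul_self A
    have hAH : Aᴴ = A := hApd.1
    rwa [hAH] at this
  -- the projector 1 - Q * Qᵀ is PSD
  have hPP : (1 - Q * Qᵀ) * (1 - Q * Qᵀ) = 1 - Q * Qᵀ := by
    have hE : Q * Qᵀ * (Q * Qᵀ) = Q * Qᵀ := by
      calc Q * Qᵀ * (Q * Qᵀ) = Q * (Qᵀ * Q) * Qᵀ := by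
            simp only [Matrix.mul_assoc]
        _ = Q * Qᵀ := by rw [hQ, Matrix.mul_one]
    have : (1 - Q * Qᵀ) * (1 - Q * Qᵀ)
        = 1 - Q * Qᵀ - Q * Qᵀ + Q * Qᵀ * (Q * Qᵀ) := by noncomm_ring
    rw [this, hE]; abel
  have hPps : (1 - Q * Qᵀ).PosSemidef := by
    have h1 := posSemidef_conjTranspose_mul_self (1 - Q * Qᵀ)
    have hH : (1 - Q * Qᵀ)ᴴ = 1 - Q * Qᵀ := by
      rw [conjTranspose_eq_transpose_of_trivial]
      simp [transpose_sub, transpose_mul]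
    rwa [hH, hPP] at h1
  -- N - A * A = (C⁻¹ * Q)ᵀ * (1 - Q Qᵀ) * (C⁻¹ * Q) is PSD
  have hdiff : (N - A * A).PosSemidef := by
    have h := hPps.conjTranspose_mul_mul_same (C⁻¹ * Q)
    have hM : (C⁻¹ * Q)ᴴ = Qᵀ * C⁻¹ := by
      rw [conjTranspose_eq_transpose_of_trivial, transpose_mul, hCiT]
    rw [hM] at h
    have e : Qᵀ * C⁻¹ * (1 - Q * Qᵀ) * (C⁻¹ * Q) = N - A * A := by
      rw [hNdef, hAdef]
      simp only [Matrix.mul_sub, Matrix.sub_mul, Matrix.mul_one, Matrix.mul_assoc]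
    rwa [e] at h
  have hmain : (A * A).det ≤ N.det := aux_det_le_det hAAps hNpd hdiff
  have h1 : A.det ^ 2 ≤ N.det := by rw [sq, ← det_mul]; exact hmain
  refine ⟨h1, ?_⟩
  have hApos : 0 < A.det ^ 2 := pow_pos hApd.det_pos 2
  rw [le_div_iff₀ hApos, one_mul]
  exact h1
end Aux
end

section
/- Let n ≥ 1, ρ ∈ (0,1), α = ρ/(1−ρ), β = α/(1+nα), and C₀ = (1−ρ)(I_n + α·1_n 1_nᵀ). Let Q be an n×p real matrix with orthonormal columns (QᵀQ = I_p) and set S = 1_nᵀ Q Qᵀ 1_n ∈ [0, n]. Then det(QᵀC₀⁻²Q)/det(QᵀC₀⁻¹Q)² = 1 + S·β²·(n − S)/(1 − Sβ)². -/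
open Matrix

lemma det_one_sub_smul_vecMulVec {p : ℕ} (t : ℝ) (u : Fin p → ℝ) :
    ((1 : Matrix (Fin p) (Fin p) ℝ) - t • vecMulVec u u).det = 1 - t * (u ⬝ᵥ u) := by
  have h : (1 : Matrix (Fin p) (Fin p) ℝ) - t • vecMulVec u u
      = 1 + Matrix.replicateCol Unit ((-t) • u) * Matrix.replicateRow Unit u := by
    rw [← vecMulVec_eq]
    ext i j
    simp [vecMulVec_apply]
    ring
  rw [h, det_one_add_replicateCol_mul_replicateRow]
  simp [dotProduct_smul]
  ring

/-- In the equicorrelation model, with `S = 1ᵀQQᵀ1 ∈ [0,n]`, the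
GLS-to-OLS ratio of maximum determinant losses is
`det(QᵀC₀⁻²Q)/det(QᵀC₀⁻¹Q)² = 1 + S·β²·(n−S)/(1−Sβ)²`. -/
theorem equicorrelation_det_ratio (n p : ℕ) (hn : 1 ≤ n)
    (ρ : ℝ) (hρ : ρ ∈ Set.Ioo (0 : ℝ) 1)
    (α β : ℝ) (hα : α = ρ / (1 - ρ)) (hβ : β = α / (1 + (n : ℝ) * α))
    (E C₀ : Matrix (Fin n) (Fin n) ℝ)
    (hE : E = Matrix.of fun _ _ => (1 : ℝ))
    (hC₀ : C₀ = (1 - ρ) • ((1 : Matrix (Fin n) (Fin n) ℝ) + α • E))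
    (Q : Matrix (Fin n) (Fin p) ℝ) (hQ : Qᵀ * Q = 1)
    (S : ℝ) (hS : S = (fun _ => (1 : ℝ)) ⬝ᵥ (Q * Qᵀ).mulVec (fun _ => (1 : ℝ))) :
    S ∈ Set.Icc (0 : ℝ) (n : ℝ) ∧
    (Qᵀ * (C₀⁻¹ * C₀⁻¹) * Q).det / (Qᵀ * C₀⁻¹ * Q).det ^ 2
      = 1 + S * β ^ 2 * ((n : ℝ) - S) / (1 - S * β) ^ 2 := by
  obtain ⟨hρ0, hρ1⟩ := hρ
  have h1ρ : (0:ℝ) < 1 - ρ := by linarith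
  have hα0 : 0 < α := by rw [hα]; positivity
  have h1nα : (0:ℝ) < 1 + (n:ℝ) * α := by positivity
  have hβ0 : 0 < β := by rw [hβ]; positivity
  have hnβ : (n:ℝ) * β < 1 := by
    rw [hβ]
    have h : (n:ℝ) * (α / (1 + (n:ℝ) * α)) = (n:ℝ) * α / (1 + (n:ℝ) * α) := by ring
    rw [h, div_lt_one h1nα]
    linarith
  -- notation
  set v : Fin n → ℝ := fun _ => (1:ℝ) with hv
  set u : Fin p → ℝ := Qᵀ *ᵥ v with hu
  -- S = u ⬝ᵥ u
  have hQu : ∀ w : Fin p → ℝ, Qᵀ *ᵥ (Q *ᵥ w) = w := by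
    intro w; rw [mulVec_mulVec, hQ, one_mulVec]
  have hdot : ∀ a : Fin n → ℝ, a ⬝ᵥ (Q *ᵥ u) = (Qᵀ *ᵥ a) ⬝ᵥ u := by
    intro a; rw [dotProduct_mulVec, mulVec_transpose]
  have hSu : S = u ⬝ᵥ u := by
    rw [hS, ← mulVec_mulVec, hdot]
  have hS0 : 0 ≤ S := by
    rw [hSu]; exact Finset.sum_nonneg fun i _ => mul_self_nonneg _
  have hvv : v ⬝ᵥ v = (n:ℝ) := by simp [hv, dotProduct]
  have hnS : (n:ℝ) - S = (v - Q *ᵥ u) ⬝ᵥ (v - Q *ᵥ u) := by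
    rw [dotProduct_sub, sub_dotProduct, sub_dotProduct, hdot, hdot, hQu, hvv,
      dotProduct_comm (Q *ᵥ u) v, hdot, ← hu, ← hSu]
    ring
  have hSn : S ≤ (n:ℝ) := by
    have : 0 ≤ (n:ℝ) - S := by
      rw [hnS]; exact Finset.sum_nonneg fun i _ => mul_self_nonneg _
    linarith
  have hSβ : 0 < 1 - S * β := by nlinarith
  refine ⟨⟨hS0, hSn⟩, ?_⟩
  -- matrix identities
  have hE2 : E * E = (n:ℝ) • E := by
    ext i j; simp [hE, Matrix.mul_apply, hv]
  have hEQ : Qᵀ * E * Q = vecMulVec u u := by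
    have hEvv : E = Matrix.replicateCol Unit v * Matrix.replicateRow Unit v := by
      rw [← vecMulVec_eq]; ext i j; simp [hE, vecMulVec_apply, hv]
    rw [hEvv, vecMulVec_eq Unit, ← Matrix.mul_assoc Qᵀ, Matrix.mul_assoc, ← replicateCol_mulVec,
      ← replicateRow_vecMul, ← mulVec_transpose, ← hu]
  -- the inverse
  set D : Matrix (Fin n) (Fin n) ℝ := (1 - ρ)⁻¹ • ((1 : Matrix (Fin n) (Fin n) ℝ) - β • E) with hD
  have hcoef : β * (α * (n:ℝ)) = α - β := by
    rw [hβ]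
    field_simp
    ring
  have key : ((1 : Matrix (Fin n) (Fin n) ℝ) + α • E) * (1 - β • E) = 1 := by
    rw [mul_sub, add_mul, add_mul]
    simp only [one_mul, mul_one, Matrix.smul_mul, Matrix.mul_smul, hE2, smul_smul]
    rw [hcoef, sub_smul]
    abel
  have hCD : C₀ * D = 1 := by
    rw [hC₀, hD, Matrix.smul_mul, Matrix.mul_smul, key, smul_smul,
      mul_inv_cancel₀ (ne_of_gt h1ρ), one_smul]
  have hCinv : C₀⁻¹ = D := Matrix.inv_eq_right_inv hCD
  -- key products
  have hQDQ : Qᵀ * D * Q = (1 - ρ)⁻¹ • ((1 : Matrix (Fin p) (Fin p) ℝ) - β • vecMulVec u u) := by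
    rw [hD, Matrix.mul_smul, Matrix.smul_mul]
    congr 1
    rw [Matrix.mul_sub, Matrix.sub_mul, Matrix.mul_one, hQ, Matrix.mul_smul, Matrix.smul_mul, hEQ]
  have hDD : D * D = ((1 - ρ)⁻¹ * (1 - ρ)⁻¹) •
      ((1 : Matrix (Fin n) (Fin n) ℝ) - (2 * β - (n:ℝ) * β ^ 2) • E) := by
    rw [hD, Matrix.smul_mul, Matrix.mul_smul, smul_smul]
    congr 1
    rw [mul_sub, sub_mul, sub_mul, one_mul, mul_one]
    simp only [one_mul, mul_one, Matrix.smul_mul, Matrix.mul_smul, hE2, smul_smul]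
    have h2 : (2 * β - (n:ℝ) * β ^ 2 : ℝ) = β + (β - β * (β * (n:ℝ))) := by ring
    rw [h2, add_smul, sub_smul]
    abel
  have hQDDQ : Qᵀ * (D * D) * Q = ((1 - ρ)⁻¹ * (1 - ρ)⁻¹) •
      ((1 : Matrix (Fin p) (Fin p) ℝ) - (2 * β - (n:ℝ) * β ^ 2) • vecMulVec u u) := by
    rw [hDD, Matrix.mul_smul, Matrix.smul_mul]
    congr 1
    rw [Matrix.mul_sub, Matrix.sub_mul, Matrix.mul_one, hQ, Matrix.mul_smul, Matrix.smul_mul, hEQ]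
  -- determinants
  have hdet1 : (Qᵀ * C₀⁻¹ * Q).det = (1 - ρ)⁻¹ ^ p * (1 - β * S) := by
    rw [hCinv, hQDQ, det_smul, det_one_sub_smul_vecMulVec, ← hSu]
    simp
  have hdet2 : (Qᵀ * (C₀⁻¹ * C₀⁻¹) * Q).det
      = ((1 - ρ)⁻¹ * (1 - ρ)⁻¹) ^ p * (1 - (2 * β - (n:ℝ) * β ^ 2) * S) := by
    rw [hCinv, hQDDQ, det_smul, det_one_sub_smul_vecMulVec, ← hSu]
    simp
  have hpow : ((1 - ρ)⁻¹ * (1 - ρ)⁻¹) ^ p = ((1 - ρ)⁻¹ ^ p) ^ 2 := by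
    rw [mul_pow, ← sq]
  rw [hdet1, hdet2, hpow, mul_pow]
  set c := (1 - ρ)⁻¹ ^ p with hcdef
  have hc : (0:ℝ) < c := by rw [hcdef]; positivity
  have h1βS : (0:ℝ) < 1 - β * S := by nlinarith
  have h1Sβ : (0:ℝ) < 1 - S * β := hSβ
  field_simp
  ring
end

section
/- Let X be an n×p real matrix of rank p, θ ∈ ℝᵖ, and P an n×n symmetric positive definite matrix with P ≠ I_n and XᵀPX invertible. Let ε be a random vector in ℝⁿ with square-integrable components satisfying E[ε_i] = 0 and E[ε_i ε_j] = σ²·δ_{ij} for some σ² > 0, and let y = Xθ + ε. Let H be the orthogonal projection matrix onto the column space of the n×2p matrix [X PX], and suppose rank(H) < n. Then E[‖(I_n − H)y‖²] = σ²·(n − rank(H)); i.e., S² = ‖(I_n − H)y‖²/(n − rank(H)) is an unbiased estimate of σ². -/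
open Matrix MeasureTheory

lemma myIntMul {Ω : Type*} [MeasurableSpace Ω] {μ : Measure Ω} {f g : Ω → ℝ}
    (hf : MemLp f 2 μ) (hg : MemLp g 2 μ) :
    Integrable (fun ω => f ω * g ω) μ := by
  have h := (((hf.add hg).integrable_sq.sub hf.integrable_sq).sub hg.integrable_sq).div_const 2
  have heq : (fun ω => f ω * g ω)
      = fun ω => (((f ω + g ω) ^ 2 - f ω ^ 2) - g ω ^ 2) / 2 := by
    funext ω; ring
  rw [heq]
  simpa using h

lemma traceEqRank {n : ℕ} (H : Matrix (Fin n) (Fin n) ℝ) (hHidem : H * H = H) :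
    H.trace = (H.rank : ℝ) := by
  have hproj : LinearMap.IsProj (LinearMap.range H.mulVecLin) H.mulVecLin := by
    constructor
    · intro x; exact LinearMap.mem_range_self _ x
    · rintro x ⟨w, rfl⟩
      have : (H * H).mulVecLin w = H.mulVecLin w := by rw [hHidem]
      simpa [Matrix.mulVecLin_mul] using this
  have := hproj.trace
  rw [Matrix.rank]
  rw [← this]
  rw [LinearMap.trace_eq_matrix_trace ℝ (Pi.basisFun ℝ (Fin n)),
    LinearMap.toMatrix_eq_toMatrix']
  congr 1
  rw [← Matrix.toLin'_apply' H, LinearMap.toMatrix'_toLin']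

/-- In the linear model `y = Xθ + ε` with uncorrelated
homoscedastic errors (`E[εᵢ]=0`, `E[εᵢεⱼ]=σ²δᵢⱼ`), if `H` is the orthogonal
projection onto the column space of `[X PX]` with `rank H < n`, then
`E[‖(I−H)y‖²] = σ²(n − rank H)`; i.e. `S² = ‖(I−H)y‖²/(n − rank H)` is an
unbiased estimate of `σ²`. -/
theorem unbiased_variance_estimate (n p : ℕ)
    (X : Matrix (Fin n) (Fin p) ℝ) (hX : X.rank = p) (θ : Fin p → ℝ)
    (P : Matrix (Fin n) (Fin n) ℝ) (hP : P.PosDef) (hPne : P ≠ 1)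
    (H : Matrix (Fin n) (Fin n) ℝ) (hHsymm : Hᵀ = H) (hHidem : H * H = H)
    (hHrange : LinearMap.range H.mulVecLin
      = LinearMap.range (Matrix.fromCols X (P * X)).mulVecLin)
    (hrk : H.rank < n)
    (Ω : Type*) [MeasurableSpace Ω] (μ : Measure Ω) [IsProbabilityMeasure μ]
    (ε : Ω → Fin n → ℝ) (σ2 : ℝ) (hσ : 0 < σ2)
    (hmem : ∀ i, MemLp (fun ω => ε ω i) 2 μ)
    (hmean : ∀ i, ∫ ω, ε ω i ∂μ = 0)
    (hcov : ∀ i j, ∫ ω, ε ω i * ε ω j ∂μ = if i = j then σ2 else 0)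
    (y : Ω → Fin n → ℝ) (hy : ∀ ω, y ω = X.mulVec θ + ε ω) :
    ∫ ω, ∑ i, (((1 : Matrix (Fin n) (Fin n) ℝ) - H).mulVec (y ω) i) ^ 2 ∂μ
      = σ2 * ((n : ℝ) - (H.rank : ℝ)) := by
  set M : Matrix (Fin n) (Fin n) ℝ := 1 - H with hM
  -- M is symmetric idempotent
  have hMsymm : Mᵀ = M := by rw [hM, Matrix.transpose_sub, Matrix.transpose_one, hHsymm]
  have hMidem : M * M = M := by
    rw [hM]; rw [Matrix.sub_mul, Matrix.mul_sub, Matrix.mul_sub, hHidem]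
    simp
  -- H fixes Xθ
  have hfix : H.mulVec (X.mulVec θ) = X.mulVec θ := by
    have hmem' : X.mulVec θ ∈ LinearMap.range H.mulVecLin := by
      rw [hHrange]
      refine ⟨Sum.elim θ 0, ?_⟩
      rw [Matrix.mulVecLin_apply, Matrix.fromCols_mulVec_sumElim]
      simp
    obtain ⟨w, hw⟩ := hmem'
    have : (H * H).mulVec w = H.mulVec w := by rw [hHidem]
    rw [← hw, Matrix.mulVecLin_apply]
    rw [Matrix.mulVec_mulVec, this]
  -- (1-H) y = (1-H) ε
  have hMy : ∀ ω, M.mulVec (y ω) = M.mulVec (ε ω) := by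
    intro ω
    rw [hy ω, Matrix.mulVec_add, hM, Matrix.sub_mulVec, Matrix.sub_mulVec,
      Matrix.one_mulVec, Matrix.one_mulVec, hfix]
    abel
  -- pointwise expansion
  have hexp : ∀ v : Fin n → ℝ, ∑ i, (M.mulVec v i) ^ 2
      = ∑ j, ∑ k, M j k * (v j * v k) := by
    intro v
    have h1 : ∀ i, (M.mulVec v i) ^ 2 = ∑ j, ∑ k, (M i j * v j) * (M i k * v k) := by
      intro i
      rw [sq]
      simp only [Matrix.mulVec, dotProduct, Finset.sum_mul_sum]
    simp_rw [h1]
    rw [Finset.sum_comm]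
    refine Finset.sum_congr rfl fun j _ => ?_
    rw [Finset.sum_comm]
    refine Finset.sum_congr rfl fun k _ => ?_
    have h2 : ∑ i, (M i j * v j) * (M i k * v k) = (∑ i, M i j * M i k) * (v j * v k) := by
      rw [Finset.sum_mul]
      refine Finset.sum_congr rfl fun i _ => by ring
    rw [h2]
    have h3 : ∑ i, M i j * M i k = M j k := by
      have : (Mᵀ * M) j k = M j k := by rw [hMsymm, hMidem]
      simpa [Matrix.mul_apply, Matrix.transpose_apply] using this
    rw [h3]
  -- integrability
  have hint : ∀ j k : Fin n, Integrable (fun ω => M j k * (ε ω j * ε ω k)) μ :=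
    fun j k => (myIntMul (hmem j) (hmem k)).const_mul _
  calc ∫ ω, ∑ i, (M.mulVec (y ω) i) ^ 2 ∂μ
      = ∫ ω, ∑ j, ∑ k, M j k * (ε ω j * ε ω k) ∂μ := by
        refine integral_congr_ae (Filter.Eventually.of_forall fun ω => ?_)
        dsimp only
        rw [hMy ω, hexp]
    _ = ∑ j, ∑ k, ∫ ω, M j k * (ε ω j * ε ω k) ∂μ := by
        rw [integral_finset_sum _ fun j _ => integrable_finset_sum _ fun k _ => hint j k]
        exact Finset.sum_congr rfl fun j _ => integral_finset_sum _ fun k _ => hint j k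
    _ = ∑ j, ∑ k, M j k * (if j = k then σ2 else 0) := by
        refine Finset.sum_congr rfl fun j _ => Finset.sum_congr rfl fun k _ => ?_
        rw [integral_const_mul, hcov j k]
    _ = σ2 * M.trace := by
        rw [Matrix.trace, Finset.mul_sum]
        refine Finset.sum_congr rfl fun j _ => ?_
        rw [Finset.sum_eq_single j (fun k _ hk => by simp [Ne.symm hk]) (by simp)]
        simp [Matrix.diag, mul_comm]
    _ = σ2 * ((n : ℝ) - (H.rank : ℝ)) := by
        rw [hM, Matrix.trace_sub, Matrix.trace_one, traceEqRank H hHidem]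
        simp
end

section
/- Let X be an n×p real matrix of rank p, θ ∈ ℝᵖ, and P an n×n symmetric positive definite matrix with XᵀPX invertible. Let ε be a random vector in ℝⁿ with square-integrable components satisfying E[ε_i] = 0 and E[ε_i ε_j] = σ²·δ_{ij}, let y = Xθ + ε, and let θ̂ = (XᵀPX)⁻¹XᵀPy. Let H be the orthogonal projection matrix onto the column space of [X PX]. Then (I_n − H)y and θ̂ are uncorrelated: for all indices i, j, E[((I_n − H)y)_i · (θ̂ − θ)_j] = 0. -/
open Matrix MeasureTheory

/-- In the linear model `y = Xθ + ε` with uncorrelated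
homoscedastic errors, the residual vector `(I−H)y` (with `H` the orthogonal
projection onto the column space of `[X PX]`) is uncorrelated with the GLS
estimate `θ̂ = (XᵀPX)⁻¹XᵀPy`: every cross-covariance
`E[((I−H)y)ᵢ·(θ̂−θ)ⱼ]` vanishes. -/
theorem residuals_uncorrelated_with_gls (n p : ℕ)
    (X : Matrix (Fin n) (Fin p) ℝ) (hX : X.rank = p) (θ : Fin p → ℝ)
    (P : Matrix (Fin n) (Fin n) ℝ) (hP : P.PosDef)
    (hXPX : IsUnit (Xᵀ * P * X).det)
    (H : Matrix (Fin n) (Fin n) ℝ) (hHsymm : Hᵀ = H) (hHidem : H * H = H)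
    (hHrange : LinearMap.range H.mulVecLin
      = LinearMap.range (Matrix.fromCols X (P * X)).mulVecLin)
    (Ω : Type*) [MeasurableSpace Ω] (μ : Measure Ω) [IsProbabilityMeasure μ]
    (ε : Ω → Fin n → ℝ) (σ2 : ℝ) (hσ : 0 < σ2)
    (hmem : ∀ i, MemLp (fun ω => ε ω i) 2 μ)
    (hmean : ∀ i, ∫ ω, ε ω i ∂μ = 0)
    (hcov : ∀ i j, ∫ ω, ε ω i * ε ω j ∂μ = if i = j then σ2 else 0)
    (y : Ω → Fin n → ℝ) (hy : ∀ ω, y ω = X.mulVec θ + ε ω)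
    (θhat : Ω → Fin p → ℝ)
    (hθhat : ∀ ω, θhat ω = ((Xᵀ * P * X)⁻¹ * Xᵀ * P).mulVec (y ω)) :
    ∀ (i : Fin n) (j : Fin p),
      ∫ ω, (((1 : Matrix (Fin n) (Fin n) ℝ) - H).mulVec (y ω) i) * (θhat ω j - θ j) ∂μ = 0 := by
  intro i j
  set A : Matrix (Fin n) (Fin n) ℝ := (1 : Matrix (Fin n) (Fin n) ℝ) - H with hA
  set B : Matrix (Fin p) (Fin n) ℝ := (Xᵀ * P * X)⁻¹ * Xᵀ * P with hB
  -- H fixes every vector in its range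
  have hfix : ∀ v : Fin n → ℝ,
      v ∈ LinearMap.range (Matrix.fromCols X (P * X)).mulVecLin → H.mulVec v = v := by
    intro v hv
    rw [← hHrange] at hv
    obtain ⟨w, hw⟩ := hv
    simp only [Matrix.mulVecLin_apply] at hw
    rw [← hw, Matrix.mulVec_mulVec, hHidem]
  have hHX : ∀ v : Fin p → ℝ, H.mulVec (X.mulVec v) = X.mulVec v := by
    intro v
    apply hfix
    exact ⟨Sum.elim v 0, by simp [Matrix.mulVecLin_apply, Matrix.fromCols_mulVec_sumElim]⟩
  have hHPX : ∀ v : Fin p → ℝ, H.mulVec ((P * X).mulVec v) = (P * X).mulVec v := by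
    intro v
    apply hfix
    exact ⟨Sum.elim 0 v, by simp [Matrix.mulVecLin_apply, Matrix.fromCols_mulVec_sumElim]⟩
  -- B * X = 1
  have hBX : B * X = 1 := by
    have h := Matrix.nonsing_inv_mul _ hXPX
    rw [hB]
    rw [Matrix.mul_assoc ((Xᵀ * P * X)⁻¹ * Xᵀ) P X, Matrix.mul_assoc ((Xᵀ * P * X)⁻¹) Xᵀ (P * X),
      ← Matrix.mul_assoc Xᵀ P X]
    exact h
  -- pointwise decomposition of residual
  have hres : ∀ ω, A.mulVec (y ω) = A.mulVec (ε ω) := by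
    intro ω
    rw [hy, Matrix.mulVec_add]
    have : A.mulVec (X.mulVec θ) = 0 := by
      rw [hA, Matrix.sub_mulVec, Matrix.one_mulVec, hHX, sub_self]
    rw [this, zero_add]
  -- pointwise decomposition of estimator
  have hest : ∀ ω, θhat ω - θ = B.mulVec (ε ω) := by
    intro ω
    rw [hθhat, hy, Matrix.mulVec_add, Matrix.mulVec_mulVec, hBX, Matrix.one_mulVec]
    abel
  -- integrability of pairwise products
  have hint : ∀ k l : Fin n, Integrable (fun ω => ε ω k * ε ω l) μ := by
    intro k l
    have h := ((hmem l).smul (hmem k)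
      (r := 1) (hpqr := ⟨by rw [inv_one, ENNReal.inv_two_add_inv_two]⟩))
    rw [← memLp_one_iff_integrable]
    exact h
  -- pointwise expansion of the integrand
  have hpt : ∀ ω, (A.mulVec (y ω) i) * (θhat ω j - θ j)
      = ∑ k : Fin n, ∑ l : Fin n, (A i k * B j l) * (ε ω k * ε ω l) := by
    intro ω
    have h1 : A.mulVec (y ω) i = ∑ k : Fin n, A i k * ε ω k := by
      rw [hres ω]; rfl
    have h2 : θhat ω j - θ j = ∑ l : Fin n, B j l * ε ω l := by
      have := congrFun (hest ω) j
      simpa [Matrix.mulVec, dotProduct] using this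
    rw [h1, h2, Finset.sum_mul_sum]
    refine Finset.sum_congr rfl fun k _ => Finset.sum_congr rfl fun l _ => by ring
  -- compute the integral
  have hI : ∫ ω, (A.mulVec (y ω) i) * (θhat ω j - θ j) ∂μ
      = ∑ k : Fin n, ∑ l : Fin n, (A i k * B j l) * (if k = l then σ2 else 0) := by
    rw [integral_congr_ae (Filter.Eventually.of_forall hpt)]
    rw [integral_finset_sum _ (fun k _ => integrable_finset_sum _
      (fun l _ => ((hint k l).const_mul _)))]
    refine Finset.sum_congr rfl fun k _ => ?_
    rw [integral_finset_sum _ (fun l _ => ((hint k l).const_mul _))]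
    refine Finset.sum_congr rfl fun l _ => ?_
    rw [integral_const_mul, hcov]
  -- the coefficient matrix vanishes
  have hPt : Pᵀ = P := by
    ext a b
    have := congrFun (congrFun hP.1 a) b
    simpa [Matrix.conjTranspose_apply] using this
  have hABt : A * Bᵀ = 0 := by
    have hBt : Bᵀ = (P * X) * ((Xᵀ * P * X)⁻¹)ᵀ := by
      rw [hB, Matrix.transpose_mul, Matrix.transpose_mul, hPt, Matrix.transpose_transpose,
        ← Matrix.mul_assoc]
    have hAPX : A * (P * X) = 0 := by
      have : H * (P * X) = P * X := by
        ext a b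
        have := congrFun (hHPX (Pi.single b 1)) a
        exact (by simpa [Matrix.mulVec_single, Matrix.mulVec_mulVec] using this : (H *ᵥ (P * X).col b) a = (P * X) a b)
      rw [hA, Matrix.sub_mul, Matrix.one_mul, this, sub_self]
    rw [hBt, ← Matrix.mul_assoc, hAPX, Matrix.zero_mul]
  have hzero : ∑ k : Fin n, ∑ l : Fin n, (A i k * B j l) * (if k = l then σ2 else 0) = 0 := by
    have : ∑ k : Fin n, ∑ l : Fin n, (A i k * B j l) * (if k = l then σ2 else 0)
        = σ2 * (A * Bᵀ) i j := by
      rw [Matrix.mul_apply, Finset.mul_sum]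
      refine Finset.sum_congr rfl fun k _ => ?_
      rw [Finset.sum_eq_single k]
      · simp [Matrix.transpose_apply]; ring
      · intro l _ hl; simp [Ne.symm hl]
      · intro h; exact absurd (Finset.mem_univ k) h
    rw [this, hABt]
    simp
  rw [hI]
  exact hzero
end

section
/- In the design setup, for every n×n symmetric positive definite matrix P (with QᵀUQ invertible, where U = JᵀPJ): (i) I₀(ξ,P) ≥ I₀(ξ,I_n), and (ii) I₁(ξ,P) ≥ λmax[(Q₊ᵀQ₊)⁻¹], provided Q₊ᵀQ₊ is invertible. -/
open Matrix

/-- The largest eigenvalue of a real square matrix (for the symmetric matrices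
considered here the set of eigenvalues is finite and nonempty, and `sSup`
yields its maximum). -/
noncomputable def lmax {m : ℕ} (A : Matrix (Fin m) (Fin m) ℝ) : ℝ :=
  sSup {r : ℝ | ∃ v : Fin m → ℝ, v ≠ 0 ∧ A.mulVec v = r • v}

section Aux

/-- trace of a real PSD matrix is nonnegative -/
lemma psd_trace_nonneg {ι : Type*} [Fintype ι] [DecidableEq ι]
    {A : Matrix ι ι ℝ} (hA : A.PosSemidef) : 0 ≤ A.trace := by
  rw [Matrix.trace]
  apply Finset.sum_nonneg
  intro i _
  have := hA.dotProduct_mulVec_nonneg (Pi.single i 1)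
  simp only [Matrix.mulVec_single, dotProduct, star_trivial] at this
  simpa [Pi.single_apply] using this

/-- projection bound: GᵀG - GᵀF(FᵀF)⁻¹FᵀG is PSD -/
lemma proj_psd {ι κ : Type*} [Fintype ι] [Fintype κ] [DecidableEq κ]
    (F G : Matrix ι κ ℝ) (h : IsUnit (Fᵀ * F).det) :
    (Gᵀ * G - Gᵀ * F * (Fᵀ * F)⁻¹ * (Fᵀ * G)).PosSemidef := by
  set S := Fᵀ * F with hS
  have hSsym : Sᵀ = S := by rw [hS, transpose_mul, transpose_transpose]
  have hSisym : (S⁻¹)ᵀ = S⁻¹ := by rw [transpose_nonsing_inv, hSsym]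
  have hSS : S * S⁻¹ = 1 := mul_nonsing_inv _ h
  set H := G - F * (S⁻¹ * (Fᵀ * G)) with hH
  have key : Hᵀ * H = Gᵀ * G - Gᵀ * F * (Fᵀ * F)⁻¹ * (Fᵀ * G) := by
    have expand : Hᵀ * H
        = Gᵀ * G - Gᵀ * F * S⁻¹ * (Fᵀ * G) - Gᵀ * F * S⁻¹ * (Fᵀ * G)
          + Gᵀ * F * S⁻¹ * (S * S⁻¹) * (Fᵀ * G) := by
      rw [hH, transpose_sub, transpose_mul, transpose_mul, transpose_mul,
        transpose_transpose, hSisym, Matrix.sub_mul, Matrix.mul_sub, Matrix.mul_sub]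
      simp only [hS, Matrix.mul_assoc]
      abel
    rw [expand, hSS, mul_one, ← hS]
    abel
  have := Matrix.posSemidef_conjTranspose_mul_self H
  rwa [Matrix.conjTranspose_eq_transpose_of_trivial, key] at this

end Aux

section Lmax

variable {m : ℕ}

lemma rayleigh_le {C : Matrix (Fin m) (Fin m) ℝ} (hC : C.IsHermitian)
    (hm : 0 < m) (v : Fin m → ℝ) :
    haveI : Nonempty (Fin m) := ⟨⟨0, hm⟩⟩
    v ⬝ᵥ C.mulVec v ≤ (Finset.univ.sup' Finset.univ_nonempty hC.eigenvalues) * (v ⬝ᵥ v) := by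
  haveI : Nonempty (Fin m) := ⟨⟨0, hm⟩⟩
  set L := Finset.univ.sup' Finset.univ_nonempty hC.eigenvalues with hL
  have hdiag : (Matrix.diagonal (fun i => L - hC.eigenvalues i)).PosSemidef :=
    posSemidef_diagonal_iff.2 fun i => sub_nonneg.2 (Finset.le_sup' _ (Finset.mem_univ i))
  have hspec := hC.spectral_theorem
  set Un := (hC.eigenvectorUnitary : Matrix (Fin m) (Fin m) ℝ) with hUn
  have hUU : Un * star Un = 1 := (Matrix.mem_unitaryGroup_iff).mp hC.eigenvectorUnitary.2
  have hdecomp : L • (1 : Matrix (Fin m) (Fin m) ℝ) - C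
      = Un * (Matrix.diagonal (fun i => L - hC.eigenvalues i)) * star Un := by
    have h1 : L • (1 : Matrix (Fin m) (Fin m) ℝ)
        = Un * (Matrix.diagonal (fun _ : Fin m => L)) * star Un := by
      have h2 : (Matrix.diagonal (fun _ : Fin m => L)) = L • (1 : Matrix (Fin m) (Fin m) ℝ) := by
        ext i j
        by_cases h : i = j <;> simp [Matrix.diagonal_apply, Matrix.one_apply, h]
      rw [h2, Matrix.mul_smul, Matrix.smul_mul, Matrix.mul_one, hUU]
    rw [h1]
    conv_lhs => rw [hspec, Unitary.conjStarAlgAut_apply, ← hUn]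
    have h3 : ∀ D1 D2 : Matrix (Fin m) (Fin m) ℝ,
        Un * D1 * star Un - Un * D2 * star Un = Un * (D1 - D2) * star Un := by
      intro D1 D2; noncomm_ring
    rw [h3]
    congr 2
    ext i j
    by_cases h : i = j <;> simp [Matrix.diagonal_apply, h]
  have hpsd : (L • (1 : Matrix (Fin m) (Fin m) ℝ) - C).PosSemidef := by
    rw [hdecomp]
    simpa [Matrix.star_eq_conjTranspose] using hdiag.mul_mul_conjTranspose_same Un
  have := hpsd.dotProduct_mulVec_nonneg v
  simp only [star_trivial, Matrix.sub_mulVec, Matrix.smul_mulVec, Matrix.one_mulVec,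
    dotProduct_sub, dotProduct_smul, smul_eq_mul] at this
  linarith

lemma lmax_eq_sup' {C : Matrix (Fin m) (Fin m) ℝ} (hC : C.IsHermitian) (hm : 0 < m) :
    haveI : Nonempty (Fin m) := ⟨⟨0, hm⟩⟩
    lmax C = Finset.univ.sup' Finset.univ_nonempty hC.eigenvalues := by
  haveI : Nonempty (Fin m) := ⟨⟨0, hm⟩⟩
  set L := Finset.univ.sup' Finset.univ_nonempty hC.eigenvalues with hL
  set S := {r : ℝ | ∃ v : Fin m → ℝ, v ≠ 0 ∧ C.mulVec v = r • v} with hSdef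
  have hub : ∀ r ∈ S, r ≤ L := by
    rintro r ⟨v, hv, hCv⟩
    have hvv : 0 < v ⬝ᵥ v := by
      rcases lt_or_eq_of_le (Finset.sum_nonneg fun i _ => mul_self_nonneg (v i)) with h | h
      · exact h
      · exact absurd (dotProduct_self_eq_zero.mp h.symm) hv
    have h1 : v ⬝ᵥ C.mulVec v = r * (v ⬝ᵥ v) := by
      rw [hCv, dotProduct_smul, smul_eq_mul]
    have h2 := rayleigh_le hC hm v
    rw [h1] at h2
    exact le_of_mul_le_mul_right h2 hvv
  have hmem : L ∈ S := by
    obtain ⟨i, _, hi⟩ := Finset.exists_mem_eq_sup' (Finset.univ_nonempty (α := Fin m))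
      hC.eigenvalues
    refine ⟨⇑(hC.eigenvectorBasis i), ?_, ?_⟩
    · intro h
      exact hC.eigenvectorBasis.orthonormal.ne_zero i (by ext j; exact congrFun h j)
    · rw [hC.mulVec_eigenvectorBasis, ← hi]
  exact le_antisymm (csSup_le ⟨L, hmem⟩ hub) (le_csSup ⟨L, hub⟩ hmem)

lemma lmax_mono {A C : Matrix (Fin m) (Fin m) ℝ} (hm : 0 < m)
    (hA : A.IsHermitian) (hC : C.IsHermitian) (h : (C - A).PosSemidef) :
    lmax A ≤ lmax C := by
  haveI : Nonempty (Fin m) := ⟨⟨0, hm⟩⟩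
  rw [lmax_eq_sup' hA hm, lmax_eq_sup' hC hm]
  obtain ⟨i, _, hi⟩ := Finset.exists_mem_eq_sup' (Finset.univ_nonempty (α := Fin m))
    hA.eigenvalues
  set v : Fin m → ℝ := ⇑(hA.eigenvectorBasis i) with hv
  have hvne : v ≠ 0 := by
    intro hz
    exact hA.eigenvectorBasis.orthonormal.ne_zero i (by ext j; exact congrFun hz j)
  have hvv : 0 < v ⬝ᵥ v := by
    rcases lt_or_eq_of_le (Finset.sum_nonneg fun i _ => mul_self_nonneg (v i)) with h' | h'
    · exact h'
    · exact absurd (dotProduct_self_eq_zero.mp h'.symm) hvne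
  have h1 : v ⬝ᵥ A.mulVec v
      = (Finset.univ.sup' Finset.univ_nonempty hA.eigenvalues) * (v ⬝ᵥ v) := by
    rw [hA.mulVec_eigenvectorBasis, dotProduct_smul, smul_eq_mul, ← hi]
  have h2 : v ⬝ᵥ A.mulVec v ≤ v ⬝ᵥ C.mulVec v := by
    have := h.dotProduct_mulVec_nonneg v
    simp only [star_trivial, Matrix.sub_mulVec, dotProduct_sub] at this
    linarith
  have h3 := rayleigh_le hC hm v
  rw [h1] at *
  exact le_of_mul_le_mul_right (le_trans h2 h3) hvv

end Lmax

section MainAux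

/-- `J * Q = Jp * Qp` -/
lemma JQ_eq {N n p q : ℕ}
    (Q : Matrix (Fin N) (Fin p) ℝ)
    (J : Matrix (Fin n) (Fin N) ℝ)
    (hJ : ∀ i, ∃ j₀, ∀ j, J i j = if j = j₀ then (1 : ℝ) else 0)
    (e : Fin q ↪ Fin N)
    (hsupp : ∀ j, j ∉ Set.range ⇑e → ∀ i, J i j = 0)
    (Jp : Matrix (Fin n) (Fin q) ℝ) (hJp : ∀ i k, Jp i k = J i (e k))
    (Qp : Matrix (Fin q) (Fin p) ℝ) (hQp : ∀ k j, Qp k j = Q (e k) j) :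
    J * Q = Jp * Qp := by
  ext i j
  simp only [Matrix.mul_apply, hJp, hQp]
  obtain ⟨j₀, hj⟩ := hJ i
  have hj₀ : j₀ ∈ Set.range ⇑e := by
    by_contra hcon
    have h0 := hsupp j₀ hcon i
    rw [hj j₀, if_pos rfl] at h0
    norm_num at h0
  obtain ⟨k₀, hk₀⟩ := hj₀
  have hL : ∑ t, J i t * Q t j = Q j₀ j := by
    simp [hj, ite_mul]
  have hek : ∀ k, J i (e k) = if k = k₀ then (1:ℝ) else 0 := by
    intro k
    rw [hj]
    by_cases h : k = k₀
    · simp [h, hk₀]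
    · have hne : e k ≠ j₀ := by
        rw [← hk₀]
        exact fun hh => h (e.injective hh)
      simp [hne, h]
  have hR : ∑ k, J i (e k) * Q (e k) j = Q j₀ j := by
    simp [hek, ite_mul, hk₀]
  rw [hL, hR]

lemma QpQp_eq {N p q : ℕ} (Q : Matrix (Fin N) (Fin p) ℝ) (e : Fin q ↪ Fin N)
    (Qp : Matrix (Fin q) (Fin p) ℝ) (hQp : ∀ k j, Qp k j = Q (e k) j)
    (d : Fin N → ℝ) (hd1 : ∀ j, j ∈ Set.range ⇑e → d j = 1)
    (hd0 : ∀ j, j ∉ Set.range ⇑e → d j = 0) :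
    Qpᵀ * Qp = Qᵀ * Matrix.diagonal d * Q := by
  ext a b
  rw [Matrix.mul_apply, Matrix.mul_apply]
  have h2 : (∑ j ∈ Finset.univ.map e, (Qᵀ * Matrix.diagonal d) a j * Q j b)
      = ∑ j, (Qᵀ * Matrix.diagonal d) a j * Q j b := by
    apply Finset.sum_subset (Finset.subset_univ _)
    intro j _ hj
    have hj' : j ∉ Set.range ⇑e := by
      intro ⟨k, hk⟩
      exact hj (Finset.mem_map.2 ⟨k, Finset.mem_univ _, hk⟩)
    rw [Matrix.mul_diagonal, hd0 j hj']
    ring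
  rw [← h2, Finset.sum_map]
  apply Finset.sum_congr rfl
  intro k _
  simp only [Matrix.mul_diagonal, hd1 (e k) ⟨k, rfl⟩, Matrix.transpose_apply, hQp]
  ring

lemma diag_mul_JT {N n q : ℕ} (J : Matrix (Fin n) (Fin N) ℝ) (e : Fin q ↪ Fin N)
    (hsupp : ∀ j, j ∉ Set.range ⇑e → ∀ i, J i j = 0)
    (d : Fin N → ℝ) (hd1 : ∀ j, j ∈ Set.range ⇑e → d j = 1)
    (hd0 : ∀ j, j ∉ Set.range ⇑e → d j = 0) :
    Matrix.diagonal d * Jᵀ = Jᵀ := by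
  ext j i
  rw [Matrix.diagonal_mul]
  by_cases h : j ∈ Set.range ⇑e
  · rw [hd1 j h, one_mul]
  · rw [hd0 j h, zero_mul, Matrix.transpose_apply, hsupp j h i]

lemma diag_idem {N : ℕ} (d : Fin N → ℝ) (hd : ∀ j, d j * d j = d j) :
    Matrix.diagonal d * Matrix.diagonal d = Matrix.diagonal d := by
  rw [Matrix.diagonal_mul_diagonal]
  exact congrArg Matrix.diagonal (funext hd)

end MainAux

/-- In the design setup, for every symmetric positive definite
precision matrix `P`: (i) `I₀(ξ,P) ≥ I₀(ξ,Iₙ) = tr[(Q₊ᵀD₊Q₊)⁻¹]`, and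
(ii) `I₁(ξ,P) ≥ λmax[(Q₊ᵀQ₊)⁻¹]`. -/
theorem loss_lower_bounds (N n p q : ℕ) (hp : 0 < p) (hpq : p ≤ q)
    (hqn : q ≤ n) (hqN : q ≤ N)
    (Q : Matrix (Fin N) (Fin p) ℝ) (hQ : Qᵀ * Q = 1)
    (J : Matrix (Fin n) (Fin N) ℝ)
    (hJ : ∀ i, ∃ j₀, ∀ j, J i j = if j = j₀ then (1 : ℝ) else 0)
    (e : Fin q ↪ Fin N)
    (hsupp : ∀ j, j ∉ Set.range ⇑e → ∀ i, J i j = 0)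
    (hpos : ∀ k, ∃ i, J i (e k) = 1)
    (Jp : Matrix (Fin n) (Fin q) ℝ) (hJp : ∀ i k, Jp i k = J i (e k))
    (Qp : Matrix (Fin q) (Fin p) ℝ) (hQp : ∀ k j, Qp k j = Q (e k) j)
    (Dp : Matrix (Fin q) (Fin q) ℝ) (hDp : Dp = Jpᵀ * Jp)
    (P : Matrix (Fin n) (Fin n) ℝ) (hP : P.PosDef)
    (hQUQ : IsUnit (Qᵀ * (Jᵀ * P * J) * Q).det)
    (hQpQp : IsUnit (Qpᵀ * Qp).det)
    (hQpDQp : IsUnit (Qpᵀ * Dp * Qp).det) :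
    Matrix.trace ((Qpᵀ * Dp * Qp)⁻¹)
      ≤ Matrix.trace ((Qᵀ * (Jᵀ * P * J) * Q)⁻¹ * (Qᵀ * (Jᵀ * P * P * J) * Q)
          * (Qᵀ * (Jᵀ * P * J) * Q)⁻¹) ∧
    lmax ((Qpᵀ * Qp)⁻¹)
      ≤ lmax ((Qᵀ * (Jᵀ * P * J) * Q)⁻¹ * (Qᵀ * ((Jᵀ * P * J) * (Jᵀ * P * J)) * Q)
          * (Qᵀ * (Jᵀ * P * J) * Q)⁻¹) := by
  classical
  have hPt : Pᵀ = P := by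
    have h := hP.1.eq
    rwa [Matrix.conjTranspose_eq_transpose_of_trivial] at h
  set M := Qᵀ * (Jᵀ * P * J) * Q with hM
  have hUt : (Jᵀ * P * J)ᵀ = Jᵀ * P * J := by
    rw [Matrix.transpose_mul, Matrix.transpose_mul, Matrix.transpose_transpose, hPt,
      Matrix.mul_assoc]
  have hMsym : Mᵀ = M := by
    rw [hM, Matrix.transpose_mul, Matrix.transpose_mul, Matrix.transpose_transpose, hUt]
    simp only [Matrix.mul_assoc]
  have hMinvsym : (M⁻¹)ᴴ = M⁻¹ := by
    rw [Matrix.conjTranspose_eq_transpose_of_trivial, Matrix.transpose_nonsing_inv, hMsym]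
  -- Part (i)
  have hJQ := JQ_eq Q J hJ e hsupp Jp hJp Qp hQp
  have hS1 : (J * Q)ᵀ * (J * Q) = Qpᵀ * Dp * Qp := by
    rw [hJQ, hDp, Matrix.transpose_mul]
    simp only [Matrix.mul_assoc]
  have hFG1 : (J * Q)ᵀ * (P * (J * Q)) = M := by
    rw [hM, Matrix.transpose_mul]
    simp only [Matrix.mul_assoc]
  have hGF1 : (P * (J * Q))ᵀ * (J * Q) = M := by
    rw [hM, Matrix.transpose_mul, Matrix.transpose_mul, hPt]
    simp only [Matrix.mul_assoc]
  have hGG1 : (P * (J * Q))ᵀ * (P * (J * Q)) = Qᵀ * (Jᵀ * P * P * J) * Q := by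
    rw [Matrix.transpose_mul, Matrix.transpose_mul, hPt]
    simp only [Matrix.mul_assoc]
  have hproj1 := proj_psd (J * Q) (P * (J * Q)) (by rw [hS1]; exact hQpDQp)
  rw [hGG1, hGF1, hS1, hFG1] at hproj1
  have hconj1 := hproj1.conjTranspose_mul_mul_same M⁻¹
  rw [hMinvsym] at hconj1
  have hsimp1 : M⁻¹ * (Qᵀ * (Jᵀ * P * P * J) * Q - M * (Qpᵀ * Dp * Qp)⁻¹ * M) * M⁻¹
      = M⁻¹ * (Qᵀ * (Jᵀ * P * P * J) * Q) * M⁻¹ - (Qpᵀ * Dp * Qp)⁻¹ := by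
    rw [Matrix.mul_sub, Matrix.sub_mul]
    congr 1
    have h9 : M⁻¹ * (M * (Qpᵀ * Dp * Qp)⁻¹ * M) * M⁻¹
        = M⁻¹ * M * (Qpᵀ * Dp * Qp)⁻¹ * (M * M⁻¹) := by simp only [Matrix.mul_assoc]
    rw [h9, nonsing_inv_mul _ hQUQ, mul_nonsing_inv _ hQUQ, Matrix.one_mul, Matrix.mul_one]
  rw [hsimp1] at hconj1
  have ht := psd_trace_nonneg hconj1
  rw [Matrix.trace_sub] at ht
  constructor
  · linarith
  -- Part (ii)
  set d : Fin N → ℝ := fun j => if j ∈ Set.range ⇑e then 1 else 0 with hdd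
  have hd1 : ∀ j, j ∈ Set.range ⇑e → d j = 1 := by
    intro j hj; rw [hdd]; simp [hj]
  have hd0 : ∀ j, j ∉ Set.range ⇑e → d j = 0 := by
    intro j hj; rw [hdd]; simp [hj]
  have hdidem : ∀ j, d j * d j = d j := by
    intro j
    by_cases h : j ∈ Set.range ⇑e
    · rw [hd1 j h]; ring
    · rw [hd0 j h]; ring
  have hQpQ := QpQp_eq Q e Qp hQp d hd1 hd0
  have hEJ := diag_mul_JT J e hsupp d hd1 hd0
  set E := Matrix.diagonal d with hE
  have hEt : Eᵀ = E := Matrix.diagonal_transpose d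
  have hEE : E * E = E := diag_idem d hdidem
  have hEU : E * (Jᵀ * P * J) = Jᵀ * P * J := by
    have h10 : E * (Jᵀ * P * J) = (E * Jᵀ) * (P * J) := by simp only [Matrix.mul_assoc]
    rw [h10, hEJ]
    simp only [Matrix.mul_assoc]
  have hUE : (Jᵀ * P * J) * E = Jᵀ * P * J := by
    have := congrArg Matrix.transpose hEU
    rwa [Matrix.transpose_mul, hEt, hUt] at this
  have hS2 : (E * Q)ᵀ * (E * Q) = Qpᵀ * Qp := by
    rw [hQpQ, Matrix.transpose_mul, hEt]
    have h11 : Qᵀ * E * (E * Q) = Qᵀ * (E * E) * Q := by simp only [Matrix.mul_assoc]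
    rw [h11, hEE]
  have hFG2 : (E * Q)ᵀ * ((Jᵀ * P * J) * Q) = M := by
    rw [hM, Matrix.transpose_mul, hEt]
    have h12 : Qᵀ * E * ((Jᵀ * P * J) * Q) = Qᵀ * (E * (Jᵀ * P * J)) * Q := by simp only [Matrix.mul_assoc]
    rw [h12, hEU]
  have hGF2 : ((Jᵀ * P * J) * Q)ᵀ * (E * Q) = M := by
    rw [hM, Matrix.transpose_mul, hUt]
    have h13 : Qᵀ * (Jᵀ * P * J) * (E * Q) = Qᵀ * ((Jᵀ * P * J) * E) * Q := by simp only [Matrix.mul_assoc]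
    rw [h13, hUE]
  have hGG2 : ((Jᵀ * P * J) * Q)ᵀ * ((Jᵀ * P * J) * Q)
      = Qᵀ * ((Jᵀ * P * J) * (Jᵀ * P * J)) * Q := by
    rw [Matrix.transpose_mul, hUt]
    simp only [Matrix.mul_assoc]
  have hproj2 := proj_psd (E * Q) ((Jᵀ * P * J) * Q) (by rw [hS2]; exact hQpQp)
  rw [hGG2, hGF2, hS2, hFG2] at hproj2
  have hconj2 := hproj2.conjTranspose_mul_mul_same M⁻¹
  rw [hMinvsym] at hconj2
  have hsimp2 : M⁻¹ * (Qᵀ * ((Jᵀ * P * J) * (Jᵀ * P * J)) * Q - M * (Qpᵀ * Qp)⁻¹ * M) * M⁻¹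
      = M⁻¹ * (Qᵀ * ((Jᵀ * P * J) * (Jᵀ * P * J)) * Q) * M⁻¹ - (Qpᵀ * Qp)⁻¹ := by
    rw [Matrix.mul_sub, Matrix.sub_mul]
    congr 1
    have h14 : M⁻¹ * (M * (Qpᵀ * Qp)⁻¹ * M) * M⁻¹
        = M⁻¹ * M * (Qpᵀ * Qp)⁻¹ * (M * M⁻¹) := by simp only [Matrix.mul_assoc]
    rw [h14, nonsing_inv_mul _ hQUQ, mul_nonsing_inv _ hQUQ, Matrix.one_mul, Matrix.mul_one]
  rw [hsimp2] at hconj2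
  have hermB : ((Qpᵀ * Qp)⁻¹).IsHermitian := by
    show ((Qpᵀ * Qp)⁻¹)ᴴ = (Qpᵀ * Qp)⁻¹
    rw [Matrix.conjTranspose_eq_transpose_of_trivial, Matrix.transpose_nonsing_inv,
      Matrix.transpose_mul, Matrix.transpose_transpose]
  have hermA : (M⁻¹ * (Qᵀ * ((Jᵀ * P * J) * (Jᵀ * P * J)) * Q) * M⁻¹).IsHermitian := by
    show _ᴴ = _
    rw [Matrix.conjTranspose_eq_transpose_of_trivial, Matrix.transpose_mul, Matrix.transpose_mul,
      Matrix.transpose_nonsing_inv, hMsym]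
    have h15 : (Qᵀ * ((Jᵀ * P * J) * (Jᵀ * P * J)) * Q)ᵀ
        = Qᵀ * ((Jᵀ * P * J) * (Jᵀ * P * J)) * Q := by
      rw [Matrix.transpose_mul, Matrix.transpose_mul, Matrix.transpose_transpose,
        Matrix.transpose_mul, hUt]
      simp only [Matrix.mul_assoc]
    rw [h15]
    simp only [Matrix.mul_assoc]
  exact lmax_mono hp hermB hermA hconj2
end

section
/- Let G be a q×q real symmetric positive definite matrix and R a q×p real matrix such that RᵀR and RᵀGR are invertible. Then (RᵀGR)⁻¹RᵀG²R(RᵀGR)⁻¹ − (RᵀR)⁻¹ is positive semidefinite; consequently λmax[(RᵀGR)⁻¹RᵀG²R(RᵀGR)⁻¹] ≥ λmax[(RᵀR)⁻¹]. -/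
open Matrix

section BiasAux


/-- Over `ℝ`, the conjugate transpose is the transpose. -/
lemma bias_real_conjTranspose {m n : ℕ} (M : Matrix (Fin m) (Fin n) ℝ) : Mᴴ = Mᵀ := by
  ext i j; simp [conjTranspose_apply]

/-- Each eigenvalue of a hermitian matrix belongs to the eigenvalue set. -/
lemma bias_eig_mem {p : ℕ} {B : Matrix (Fin p) (Fin p) ℝ} (hB : B.IsHermitian) (j : Fin p) :
    hB.eigenvalues j ∈ {r : ℝ | ∃ v : Fin p → ℝ, v ≠ 0 ∧ B.mulVec v = r • v} := by
  refine ⟨⇑(hB.eigenvectorBasis j), ?_, hB.mulVec_eigenvectorBasis j⟩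
  intro hc
  have h1 : hB.eigenvectorBasis j = 0 := by ext i; exact congrFun hc i
  have h2 := hB.eigenvectorBasis.orthonormal.1 j
  rw [h1] at h2; simp at h2

/-- Rayleigh-quotient upper bound for a real symmetric matrix. -/
lemma bias_rayleigh_le {p : ℕ} {B : Matrix (Fin p) (Fin p) ℝ} (hB : B.IsHermitian)
    {μ : ℝ} (hμ : ∀ i, hB.eigenvalues i ≤ μ) (x : Fin p → ℝ) :
    x ⬝ᵥ (B *ᵥ x) ≤ μ * (x ⬝ᵥ x) := by
  set U : Matrix (Fin p) (Fin p) ℝ := (hB.eigenvectorUnitary : Matrix (Fin p) (Fin p) ℝ) with hU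
  have hspec : B = U * diagonal (RCLike.ofReal ∘ hB.eigenvalues) * star U := hB.spectral_theorem
  have hUU : U * star U = 1 := (Matrix.mem_unitaryGroup_iff).mp hB.eigenvectorUnitary.2
  set y : Fin p → ℝ := (star U) *ᵥ x with hy
  have hsU : star U = Uᵀ := by ext i j; simp [Matrix.star_apply]
  have hvm : x ᵥ* U = y := by rw [← mulVec_transpose, ← hsU]
  have hxy : x ⬝ᵥ (B *ᵥ x) = ∑ i, hB.eigenvalues i * (y i)^2 := by
    conv_lhs => rw [hspec]
    rw [← mulVec_mulVec, ← mulVec_mulVec, dotProduct_mulVec x U, hvm]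
    simp [dotProduct, mulVec_diagonal, sq, mul_comm, mul_assoc, mul_left_comm]
    rfl
  have hyy : y ⬝ᵥ y = x ⬝ᵥ x := by
    nth_rewrite 1 [← hvm]
    rw [← dotProduct_mulVec, hy, mulVec_mulVec, hUU, one_mulVec]
  rw [hxy, ← hyy]
  have h2 : μ * (y ⬝ᵥ y) = ∑ i, μ * (y i)^2 := by
    simp [dotProduct, Finset.mul_sum, sq]
  rw [h2]
  exact Finset.sum_le_sum fun i _ => mul_le_mul_of_nonneg_right (hμ i) (sq_nonneg _)

/-- Monotonicity of the largest eigenvalue under the psd order, for symmetric matrices. -/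
lemma bias_lmax_le_lmax {p : ℕ} {A B : Matrix (Fin p) (Fin p) ℝ} (hA : A.IsHermitian)
    (hB : B.IsHermitian) (hBA : (B - A).PosSemidef) : lmax A ≤ lmax B := by
  rcases Nat.eq_zero_or_pos p with hp | hp
  · subst hp
    have hSA : {r : ℝ | ∃ v : Fin 0 → ℝ, v ≠ 0 ∧ A.mulVec v = r • v} = ∅ := by
      ext r; simp only [Set.mem_setOf_eq, Set.mem_empty_iff_false, iff_false]
      rintro ⟨v, hv, -⟩
      exact hv (funext fun i => i.elim0)
    have hSB : {r : ℝ | ∃ v : Fin 0 → ℝ, v ≠ 0 ∧ B.mulVec v = r • v} = ∅ := by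
      ext r; simp only [Set.mem_setOf_eq, Set.mem_empty_iff_false, iff_false]
      rintro ⟨v, hv, -⟩
      exact hv (funext fun i => i.elim0)
    unfold lmax
    rw [hSA, hSB]
  · haveI : NeZero p := ⟨hp.ne'⟩
    have hne : (Finset.univ : Finset (Fin p)).Nonempty := Finset.univ_nonempty
    set μ : ℝ := Finset.univ.sup' hne hB.eigenvalues with hμdef
    have hμ : ∀ i, hB.eigenvalues i ≤ μ := fun i => Finset.le_sup' _ (Finset.mem_univ i)
    have key : ∀ r ∈ {r : ℝ | ∃ v : Fin p → ℝ, v ≠ 0 ∧ B.mulVec v = r • v}, r ≤ μ := by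
      rintro r ⟨v, hv, hrv⟩
      have hvv : 0 < v ⬝ᵥ v := by simpa using dotProduct_self_star_pos_iff.mpr hv
      have h1 : v ⬝ᵥ (B *ᵥ v) = r * (v ⬝ᵥ v) := by rw [hrv]; simp [dotProduct_smul]
      have h2 := bias_rayleigh_le hB hμ v
      rw [h1] at h2
      exact le_of_mul_le_mul_right h2 hvv
    have hbdd : BddAbove {r : ℝ | ∃ v : Fin p → ℝ, v ≠ 0 ∧ B.mulVec v = r • v} := ⟨μ, key⟩
    have hμmem : μ ∈ {r : ℝ | ∃ v : Fin p → ℝ, v ≠ 0 ∧ B.mulVec v = r • v} := by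
      obtain ⟨j, -, hj⟩ := Finset.exists_mem_eq_sup' hne hB.eigenvalues
      rw [hμdef, hj]
      exact bias_eig_mem hB j
    have hμle : μ ≤ lmax B := le_csSup hbdd hμmem
    apply csSup_le ⟨hA.eigenvalues ⟨0, hp⟩, bias_eig_mem hA ⟨0, hp⟩⟩
    rintro r ⟨v, hv, hrv⟩
    have hvv : 0 < v ⬝ᵥ v := by simpa using dotProduct_self_star_pos_iff.mpr hv
    have h1 : v ⬝ᵥ (A *ᵥ v) = r * (v ⬝ᵥ v) := by rw [hrv]; simp [dotProduct_smul]
    have h2 : 0 ≤ v ⬝ᵥ ((B - A) *ᵥ v) := by simpa using hBA.dotProduct_mulVec_nonneg v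
    have h3 : v ⬝ᵥ (A *ᵥ v) ≤ v ⬝ᵥ (B *ᵥ v) := by
      rw [sub_mulVec, dotProduct_sub] at h2; linarith
    have h4 := bias_rayleigh_le hB hμ v
    have h5 : r * (v ⬝ᵥ v) ≤ μ * (v ⬝ᵥ v) := by rw [← h1]; linarith
    have h6 : r ≤ μ := le_of_mul_le_mul_right h5 hvv
    linarith

/-- The key algebraic identity: the difference is of the form `Dᴴ * D`. -/
lemma bias_key_identity (q p : ℕ)
    (G : Matrix (Fin q) (Fin q) ℝ) (hG : G.PosDef)
    (R : Matrix (Fin q) (Fin p) ℝ)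
    (hRR : IsUnit (Rᵀ * R).det) (hRGR : IsUnit (Rᵀ * G * R).det) :
    ∃ D : Matrix (Fin q) (Fin p) ℝ,
      (Rᵀ * G * R)⁻¹ * (Rᵀ * G * G * R) * (Rᵀ * G * R)⁻¹ - (Rᵀ * R)⁻¹ = Dᴴ * D := by
  have hGT : Gᵀ = G := by
    have h := hG.1
    ext i j
    have h2 := congrFun (congrFun h i) j
    simpa using h2
  set X := (Rᵀ * G * R)⁻¹ with hX
  set W := (Rᵀ * R)⁻¹ with hW
  have hXT : Xᵀ = X := by
    rw [hX, transpose_nonsing_inv]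
    congr 1
    rw [transpose_mul, transpose_mul, transpose_transpose, hGT, Matrix.mul_assoc]
  have hWT : Wᵀ = W := by
    rw [hW, transpose_nonsing_inv]
    congr 1
    rw [transpose_mul, transpose_transpose]
  have hXinv : (Rᵀ * G * R) * X = 1 := mul_nonsing_inv _ hRGR
  have hWinv : W * (Rᵀ * R) = 1 := nonsing_inv_mul _ hRR
  set P : Matrix (Fin q) (Fin q) ℝ := 1 - R * W * Rᵀ with hP
  set C : Matrix (Fin q) (Fin p) ℝ := G * R * X with hC
  have hPT : Pᵀ = P := by
    rw [hP, transpose_sub, transpose_one, transpose_mul, transpose_mul, transpose_transpose,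
      hWT, Matrix.mul_assoc]
  have hKK : R * W * Rᵀ * (R * W * Rᵀ) = R * W * Rᵀ := by
    have e1 : R * W * Rᵀ * (R * W * Rᵀ) = R * ((W * (Rᵀ * R)) * (W * Rᵀ)) := by
      simp only [Matrix.mul_assoc]
    rw [e1, hWinv, Matrix.one_mul, ← Matrix.mul_assoc]
  have hPP : P * P = P := by
    rw [hP, Matrix.sub_mul, Matrix.mul_sub, Matrix.mul_sub, Matrix.one_mul, Matrix.mul_one, hKK]
    simp only [Matrix.one_mul]
    abel
  have hRC : Rᵀ * C = 1 := by
    rw [hC]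
    simp only [← Matrix.mul_assoc]
    exact hXinv
  have hCR : Cᵀ * R = 1 := by
    have h := congrArg transpose hRC
    rwa [transpose_mul, transpose_transpose, transpose_one] at h
  have hCT : Cᵀ = X * (Rᵀ * G) := by
    rw [hC, transpose_mul, transpose_mul, hXT, hGT]
  have hCC : Cᵀ * C = X * (Rᵀ * G * G * R) * X := by
    rw [hCT, hC]
    simp only [Matrix.mul_assoc]
  refine ⟨P * C, ?_⟩
  rw [bias_real_conjTranspose, transpose_mul, hPT, Matrix.mul_assoc Cᵀ P (P * C),
    ← Matrix.mul_assoc P P C, hPP]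
  have hPC : Cᵀ * (P * C) = Cᵀ * C - W := by
    rw [hP, Matrix.sub_mul, Matrix.one_mul, Matrix.mul_sub]
    congr 1
    rw [show R * W * Rᵀ * C = R * (W * (Rᵀ * C)) from by simp only [Matrix.mul_assoc], hRC,
      Matrix.mul_one, ← Matrix.mul_assoc, hCR, Matrix.one_mul]
  rw [hPC, hCC]

end BiasAux

/-- For `G ≻ 0` and `R : q × p` with `RᵀR`, `RᵀGR` invertible,
`(RᵀGR)⁻¹RᵀG²R(RᵀGR)⁻¹ − (RᵀR)⁻¹` is psd, and consequently
`λmax[(RᵀGR)⁻¹RᵀG²R(RᵀGR)⁻¹] ≥ λmax[(RᵀR)⁻¹]`. -/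
theorem bias_component_bound (q p : ℕ)
    (G : Matrix (Fin q) (Fin q) ℝ) (hG : G.PosDef)
    (R : Matrix (Fin q) (Fin p) ℝ)
    (hRR : IsUnit (Rᵀ * R).det) (hRGR : IsUnit (Rᵀ * G * R).det) :
    ((Rᵀ * G * R)⁻¹ * (Rᵀ * G * G * R) * (Rᵀ * G * R)⁻¹ - (Rᵀ * R)⁻¹).PosSemidef ∧
    lmax ((Rᵀ * R)⁻¹) ≤ lmax ((Rᵀ * G * R)⁻¹ * (Rᵀ * G * G * R) * (Rᵀ * G * R)⁻¹) := by
  obtain ⟨D, hD⟩ := bias_key_identity q p G hG R hRR hRGR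
  have hpsd : ((Rᵀ * G * R)⁻¹ * (Rᵀ * G * G * R) * (Rᵀ * G * R)⁻¹ - (Rᵀ * R)⁻¹).PosSemidef := by
    rw [hD]; exact posSemidef_conjTranspose_mul_self D
  refine ⟨hpsd, ?_⟩
  have hWh : ((Rᵀ * R)⁻¹).IsHermitian := by
    show ((Rᵀ * R)⁻¹)ᴴ = (Rᵀ * R)⁻¹
    rw [bias_real_conjTranspose, transpose_nonsing_inv]
    congr 1
    rw [transpose_mul, transpose_transpose]
  have hBh : ((Rᵀ * G * R)⁻¹ * (Rᵀ * G * G * R) * (Rᵀ * G * R)⁻¹).IsHermitian := by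
    have heq : (Rᵀ * G * R)⁻¹ * (Rᵀ * G * G * R) * (Rᵀ * G * R)⁻¹ =
        ((Rᵀ * G * R)⁻¹ * (Rᵀ * G * G * R) * (Rᵀ * G * R)⁻¹ - (Rᵀ * R)⁻¹) + (Rᵀ * R)⁻¹ := by
      abel
    rw [heq]
    exact hpsd.1.add hWh
  exact bias_lmax_le_lmax hWh hBh hpsd
end

section
/- Let D be a q×q real symmetric positive definite matrix and R a q×p real matrix such that RᵀR and RᵀDR are invertible. Then (RᵀR)⁻¹RᵀD⁻¹R(RᵀR)⁻¹ − (RᵀDR)⁻¹ is positive semidefinite; in particular tr[(RᵀR)⁻¹RᵀD⁻¹R(RᵀR)⁻¹] ≥ tr[(RᵀDR)⁻¹]. -/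
open Matrix

lemma psd_trace_nonneg_s15 {n : ℕ} {M : Matrix (Fin n) (Fin n) ℝ}
    (hM : M.PosSemidef) : 0 ≤ M.trace := by
  rw [Matrix.trace]
  apply Finset.sum_nonneg
  intro i _
  exact hM.diag_nonneg

open scoped MatrixOrder in
lemma exists_psd_sqrt {q : ℕ} {D : Matrix (Fin q) (Fin q) ℝ} (hD : D.PosDef) :
    ∃ S : Matrix (Fin q) (Fin q) ℝ, S * S = D ∧ Sᴴ = S :=
  ⟨CFC.sqrt D, CFC.sqrt_mul_sqrt_self D hD.posSemidef.nonneg, (CFC.sqrt_nonneg D).posSemidef.1⟩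

/-- For `D ≻ 0` and `R : q × p` with `RᵀR`, `RᵀDR` invertible,
`(RᵀR)⁻¹RᵀD⁻¹R(RᵀR)⁻¹ − (RᵀDR)⁻¹` is psd, and in particular
`tr[(RᵀR)⁻¹RᵀD⁻¹R(RᵀR)⁻¹] ≥ tr[(RᵀDR)⁻¹]`. -/
theorem variance_component_bound (q p : ℕ)
    (D : Matrix (Fin q) (Fin q) ℝ) (hD : D.PosDef)
    (R : Matrix (Fin q) (Fin p) ℝ)
    (hRR : IsUnit (Rᵀ * R).det) (hRDR : IsUnit (Rᵀ * D * R).det) :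
    ((Rᵀ * R)⁻¹ * (Rᵀ * D⁻¹ * R) * (Rᵀ * R)⁻¹ - (Rᵀ * D * R)⁻¹).PosSemidef ∧
    Matrix.trace ((Rᵀ * D * R)⁻¹)
      ≤ Matrix.trace ((Rᵀ * R)⁻¹ * (Rᵀ * D⁻¹ * R) * (Rᵀ * R)⁻¹) := by
  obtain ⟨S, hSS0, hSH⟩ := exists_psd_sqrt hD
  have hSS : S * S = D := hSS0
  have hSsym : Sᵀ = S := by
    rw [← Matrix.conjTranspose_eq_transpose_of_trivial]
    exact hSH
  have hSdet : IsUnit S.det := by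
    have hDdet : IsUnit D.det := hD.isUnit.map Matrix.detMonoidHom
    rw [← hSS, Matrix.det_mul] at hDdet
    exact isUnit_of_mul_isUnit_left hDdet
  have hDsym : Dᵀ = D := by
    rw [← Matrix.conjTranspose_eq_transpose_of_trivial]
    exact hD.1
  set E := D⁻¹ with hEdef
  set T := S⁻¹ with hTdef
  set V := (Rᵀ * R)⁻¹ with hVdef
  set W := (Rᵀ * D * R)⁻¹ with hWdef
  have hSinv : T * S = 1 := Matrix.nonsing_inv_mul S hSdet
  have hSinv' : S * T = 1 := Matrix.mul_nonsing_inv S hSdet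
  have hSinvsym : Tᵀ = T := by
    rw [hTdef, Matrix.transpose_nonsing_inv, hSsym]
  have hDinv : T * T = E := by
    rw [hTdef, hEdef, ← hSS, Matrix.mul_inv_rev]
  have hRRinv : V * (Rᵀ * R) = 1 := Matrix.nonsing_inv_mul _ hRR
  have hRRinv' : (Rᵀ * R) * V = 1 := Matrix.mul_nonsing_inv _ hRR
  have hRDRinv : W * (Rᵀ * D * R) = 1 := Matrix.nonsing_inv_mul _ hRDR
  have hRDRinv' : (Rᵀ * D * R) * W = 1 := Matrix.mul_nonsing_inv _ hRDR
  have hRRsym : (Rᵀ * R)ᵀ = Rᵀ * R := by simp [Matrix.transpose_mul]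
  have hVsym : Vᵀ = V := by
    rw [hVdef, Matrix.transpose_nonsing_inv, hRRsym]
  have hRDRsym : (Rᵀ * D * R)ᵀ = Rᵀ * D * R := by
    simp [Matrix.transpose_mul, hDsym, Matrix.mul_assoc]
  have hWsym : Wᵀ = W := by
    rw [hWdef, Matrix.transpose_nonsing_inv, hRDRsym]
  -- cancellation lemmas in right-associated normal form
  have c1 : ∀ m (X : Matrix (Fin q) (Fin m) ℝ), T * (S * X) = X := by
    intro m X; have h := congrArg (· * X) hSinv; simpa [Matrix.mul_assoc] using h
  have c2 : ∀ m (X : Matrix (Fin q) (Fin m) ℝ), S * (T * X) = X := by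
    intro m X; have h := congrArg (· * X) hSinv'; simpa [Matrix.mul_assoc] using h
  have d1 : ∀ m (X : Matrix (Fin q) (Fin m) ℝ), S * (S * X) = D * X := by
    intro m X; have h := congrArg (· * X) hSS; simpa [Matrix.mul_assoc] using h
  have d2 : ∀ m (X : Matrix (Fin q) (Fin m) ℝ), T * (T * X) = E * X := by
    intro m X; have h := congrArg (· * X) hDinv; simpa [Matrix.mul_assoc] using h
  have c3 : ∀ m (X : Matrix (Fin p) (Fin m) ℝ), V * (Rᵀ * (R * X)) = X := by
    intro m X; have h := congrArg (· * X) hRRinv; simpa [Matrix.mul_assoc] using h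
  have c4 : ∀ m (X : Matrix (Fin p) (Fin m) ℝ), Rᵀ * (R * (V * X)) = X := by
    intro m X; have h := congrArg (· * X) hRRinv'; simpa [Matrix.mul_assoc] using h
  have c4' : Rᵀ * (R * V) = 1 := by
    rw [← Matrix.mul_assoc]; exact hRRinv'
  have c5 : ∀ m (X : Matrix (Fin p) (Fin m) ℝ), W * (Rᵀ * (D * (R * X))) = X := by
    intro m X; have h := congrArg (· * X) hRDRinv; simpa [Matrix.mul_assoc] using h
  have c6 : ∀ m (X : Matrix (Fin p) (Fin m) ℝ), Rᵀ * (D * (R * (W * X))) = X := by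
    intro m X; have h := congrArg (· * X) hRDRinv'; simpa [Matrix.mul_assoc] using h
  have c6' : Rᵀ * (D * (R * W)) = 1 := by
    rw [← Matrix.mul_assoc, ← Matrix.mul_assoc]; exact hRDRinv'
  set A : Matrix (Fin q) (Fin p) ℝ := T * R * V with hAdef
  set P : Matrix (Fin q) (Fin q) ℝ := S * R * W * Rᵀ * S with hPdef
  have hPsym : Pᵀ = P := by
    simp [hPdef, Matrix.transpose_mul, hSsym, hWsym, Matrix.mul_assoc]
  have hPidem : P * P = P := by
    simp only [hPdef, Matrix.mul_assoc, c1, c2, d1, d2, c3, c4, c4', c5, c6, c6',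
      Matrix.mul_one, Matrix.one_mul]
  have hIMP : (1 - P).PosSemidef := by
    have h1 : (1 - P)ᵀ * (1 - P) = 1 - P := by
      rw [Matrix.transpose_sub, hPsym, Matrix.transpose_one]
      rw [Matrix.sub_mul, Matrix.mul_sub, Matrix.mul_sub, hPidem]
      simp
    have hps := Matrix.posSemidef_conjTranspose_mul_self (1 - P)
    rwa [Matrix.conjTranspose_eq_transpose_of_trivial, h1] at hps
  have hAT : Aᵀ = V * (Rᵀ * T) := by
    simp [hAdef, Matrix.transpose_mul, hVsym, hSinvsym, Matrix.mul_assoc]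
  have key : Aᵀ * (1 - P) * A = V * (Rᵀ * E * R) * V - W := by
    rw [Matrix.mul_sub, Matrix.mul_one, Matrix.sub_mul]
    congr 1
    · rw [hAT, hAdef]
      simp only [Matrix.mul_assoc, c1, c2, d1, d2, c3, c4, c4', c5, c6, c6',
        Matrix.mul_one, Matrix.one_mul]
    · rw [hAT, hAdef, hPdef]
      simp only [Matrix.mul_assoc, c1, c2, d1, d2, c3, c4, c4', c5, c6, c6',
        Matrix.mul_one, Matrix.one_mul]
  have hpsd : (V * (Rᵀ * E * R) * V - W).PosSemidef := by
    rw [← key]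
    have h2 := hIMP.conjTranspose_mul_mul_same A
    rwa [Matrix.conjTranspose_eq_transpose_of_trivial] at h2
  refine ⟨hpsd, ?_⟩
  have ht := psd_trace_nonneg_s15 hpsd
  rw [Matrix.trace_sub] at ht
  linarith
end

section
/- In the design setup, assume Q₊ᵀQ₊ and Q₊ᵀD₊Q₊ are invertible. (i) If the identity (Q₊ᵀQ₊)⁻¹(Q₊ᵀD₊⁻¹Q₊)(Q₊ᵀQ₊)⁻¹ = (Q₊ᵀD₊Q₊)⁻¹ does NOT hold, then tr[(Q₊ᵀQ₊)⁻¹(Q₊ᵀD₊⁻¹Q₊)(Q₊ᵀQ₊)⁻¹] > tr[(Q₊ᵀD₊Q₊)⁻¹], i.e., I₀(ξ,P₀) > I₀(ξ,I_n). (ii) If λmax[(Q₊ᵀD₊Q₊)⁻¹(Q₊ᵀD₊²Q₊)(Q₊ᵀD₊Q₊)⁻¹] ≠ λmax[(Q₊ᵀQ₊)⁻¹], then λmax[(Q₊ᵀD₊Q₊)⁻¹(Q₊ᵀD₊²Q₊)(Q₊ᵀD₊Q₊)⁻¹] > λmax[(Q₊ᵀQ₊)⁻¹], i.e., I₁(ξ,I_n)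 > I₁(ξ,P₀). -/
open Matrix

lemma rayleigh_bound {m : ℕ} (A U : Matrix (Fin m) (Fin m) ℝ) (μ : Fin m → ℝ)
    (hU : U * star U = 1) (hfact : A = U * Matrix.diagonal μ * star U)
    (c : ℝ) (hc : ∀ i, μ i ≤ c) (v : Fin m → ℝ) :
    v ⬝ᵥ A *ᵥ v ≤ c * (v ⬝ᵥ v) := by
  subst hfact
  have hstar : star U = Uᵀ := by ext i j; simp [Matrix.star_apply]
  rw [hstar] at hU ⊢
  set w : Fin m → ℝ := Uᵀ *ᵥ v with hw
  have h1 : v ⬝ᵥ (U * Matrix.diagonal μ * Uᵀ) *ᵥ v = w ⬝ᵥ (Matrix.diagonal μ) *ᵥ w := by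
    rw [Matrix.mul_assoc, ← Matrix.mulVec_mulVec, ← Matrix.mulVec_mulVec,
      Matrix.dotProduct_mulVec v U, ← Matrix.mulVec_transpose]
  have h2 : v ⬝ᵥ v = w ⬝ᵥ w := by
    have : w ⬝ᵥ (Uᵀ *ᵥ v) = v ⬝ᵥ v := by
      rw [Matrix.dotProduct_mulVec, Matrix.vecMul_transpose, Matrix.mulVec_mulVec, hU,
        Matrix.one_mulVec]
    rw [← this]
  rw [h1, h2]
  simp only [dotProduct, Matrix.mulVec_diagonal]
  rw [Finset.mul_sum]
  apply Finset.sum_le_sum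
  intro i _
  calc w i * (μ i * w i) = μ i * (w i * w i) := by ring
    _ ≤ c * (w i * w i) := by nlinarith [hc i, mul_self_nonneg (w i)]

lemma dotProduct_self_pos' {m : ℕ} {v : Fin m → ℝ} (hv : v ≠ 0) : 0 < v ⬝ᵥ v := by
  have h0 : 0 ≤ v ⬝ᵥ v := by
    simp only [dotProduct]
    exact Finset.sum_nonneg fun i _ => mul_self_nonneg _
  rcases h0.lt_or_eq with h | h
  · exact h
  · exact absurd (dotProduct_self_eq_zero.mp h.symm) hv

lemma eig_mem {m : ℕ} (A : Matrix (Fin m) (Fin m) ℝ) (hA : A.IsHermitian) (i : Fin m) :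
    (hA.eigenvalues i) ∈ {r : ℝ | ∃ v : Fin m → ℝ, v ≠ 0 ∧ A.mulVec v = r • v} := by
  refine ⟨⇑(hA.eigenvectorBasis i), ?_, hA.mulVec_eigenvectorBasis i⟩
  intro h
  have hn := hA.eigenvectorBasis.orthonormal.1 i
  rw [show (hA.eigenvectorBasis i) = 0 from by ext j; exact congrFun h j] at hn
  simp at hn

lemma spectral_fact {m : ℕ} (A : Matrix (Fin m) (Fin m) ℝ) (hA : A.IsHermitian) :
    A = (hA.eigenvectorUnitary : Matrix (Fin m) (Fin m) ℝ) *
      Matrix.diagonal hA.eigenvalues * star (hA.eigenvectorUnitary : Matrix (Fin m) (Fin m) ℝ) := by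
  simpa using hA.spectral_theorem

lemma lmax_spec {m : ℕ} (hm : 0 < m) (A : Matrix (Fin m) (Fin m) ℝ) (hA : A.IsHermitian) :
    IsGreatest {r : ℝ | ∃ v : Fin m → ℝ, v ≠ 0 ∧ A.mulVec v = r • v} (lmax A) := by
  haveI : Nonempty (Fin m) := ⟨⟨0, hm⟩⟩
  obtain ⟨i₀, hi₀⟩ := Finite.exists_max hA.eigenvalues
  have hU : (hA.eigenvectorUnitary : Matrix (Fin m) (Fin m) ℝ) *
      star (hA.eigenvectorUnitary : Matrix (Fin m) (Fin m) ℝ) = 1 :=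
    Unitary.coe_mul_star_self _
  have hgt : IsGreatest {r : ℝ | ∃ v : Fin m → ℝ, v ≠ 0 ∧ A.mulVec v = r • v}
      (hA.eigenvalues i₀) := by
    constructor
    · exact eig_mem A hA i₀
    · rintro r ⟨v, hv, heig⟩
      have hb := rayleigh_bound A _ hA.eigenvalues hU (spectral_fact A hA)
        (hA.eigenvalues i₀) hi₀ v
      rw [heig] at hb
      have hdp : v ⬝ᵥ r • v = r * (v ⬝ᵥ v) := by
        simp [dotProduct, Finset.mul_sum]
        exact Finset.sum_congr rfl fun i _ => by ring
      rw [hdp] at hb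
      exact le_of_mul_le_mul_right hb (dotProduct_self_pos' hv)
  rwa [lmax, hgt.csSup_eq]

lemma lmax_le_lmax {m : ℕ} (hm : 0 < m) (L K : Matrix (Fin m) (Fin m) ℝ)
    (hL : L.IsHermitian) (hK : K.IsHermitian)
    (h : ∀ v : Fin m → ℝ, v ⬝ᵥ L *ᵥ v ≤ v ⬝ᵥ K *ᵥ v) : lmax L ≤ lmax K := by
  haveI : Nonempty (Fin m) := ⟨⟨0, hm⟩⟩
  obtain ⟨⟨v, hv, heig⟩, _⟩ := lmax_spec hm L hL
  have hKg := lmax_spec hm K hK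
  have hU : (hK.eigenvectorUnitary : Matrix (Fin m) (Fin m) ℝ) *
      star (hK.eigenvectorUnitary : Matrix (Fin m) (Fin m) ℝ) = 1 :=
    Unitary.coe_mul_star_self _
  have hb := rayleigh_bound K _ hK.eigenvalues hU (spectral_fact K hK)
    (lmax K) (fun i => hKg.2 (eig_mem K hK i)) v
  have hlhs : v ⬝ᵥ L *ᵥ v = lmax L * (v ⬝ᵥ v) := by
    rw [heig]
    simp [dotProduct, Finset.mul_sum]
    exact Finset.sum_congr rfl fun i _ => by ring
  have : lmax L * (v ⬝ᵥ v) ≤ lmax K * (v ⬝ᵥ v) := by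
    rw [← hlhs]; exact le_trans (h v) hb
  exact le_of_mul_le_mul_right this (dotProduct_self_pos' hv)


lemma key_aux1 {p q : ℕ} (Qp : Matrix (Fin q) (Fin p) ℝ)
    (E F D Dinv : Matrix (Fin q) (Fin q) ℝ) (Ai Mi : Matrix (Fin p) (Fin p) ℝ)
    (hFE : F * E = 1) (hEF : E * F = 1) (hEE : E * E = D) (hFF : F * F = Dinv)
    (hEt : Eᵀ = E) (hFt : Fᵀ = F) (hAit : Aiᵀ = Ai) (hMit : Miᵀ = Mi)
    (hA1 : Ai * (Qpᵀ * Qp) = 1) (hA3 : (Qpᵀ * Qp) * Ai = 1)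
    (hM1 : Mi * (Qpᵀ * D * Qp) = 1) (hM3 : (Qpᵀ * D * Qp) * Mi = 1) :
    (F * Qp * Ai - E * Qp * Mi)ᵀ * (F * Qp * Ai - E * Qp * Mi)
      = Ai * (Qpᵀ * Dinv * Qp) * Ai - Mi := by
  have cF : ∀ X : Matrix (Fin q) (Fin p) ℝ, F * (F * X) = Dinv * X := fun X => by
    rw [← Matrix.mul_assoc, hFF]
  have cFE : ∀ X : Matrix (Fin q) (Fin p) ℝ, F * (E * X) = X := fun X => by
    rw [← Matrix.mul_assoc, hFE, Matrix.one_mul]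
  have cEF : ∀ X : Matrix (Fin q) (Fin p) ℝ, E * (F * X) = X := fun X => by
    rw [← Matrix.mul_assoc, hEF, Matrix.one_mul]
  have cEE : ∀ X : Matrix (Fin q) (Fin p) ℝ, E * (E * X) = D * X := fun X => by
    rw [← Matrix.mul_assoc, hEE]
  have cA : ∀ X : Matrix (Fin p) (Fin p) ℝ, Ai * (Qpᵀ * (Qp * X)) = X := fun X => by
    rw [← Matrix.mul_assoc Qpᵀ Qp X, ← Matrix.mul_assoc, hA1, Matrix.one_mul]
  have cA2 : Qpᵀ * (Qp * Ai) = 1 := by rw [← Matrix.mul_assoc, hA3]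
  have cM : ∀ X : Matrix (Fin p) (Fin p) ℝ, Mi * (Qpᵀ * (D * (Qp * X))) = X := fun X => by
    rw [← Matrix.mul_assoc D Qp X, ← Matrix.mul_assoc Qpᵀ (D * Qp) X,
      ← Matrix.mul_assoc Qpᵀ D Qp, ← Matrix.mul_assoc, hM1, Matrix.one_mul]
  simp only [Matrix.transpose_sub, Matrix.transpose_mul, hEt, hFt, hAit, hMit,
    Matrix.sub_mul, Matrix.mul_sub, Matrix.mul_assoc]
  rw [cF, cFE, cEF, cEE, cA, cA2, cM, Matrix.mul_one]
  abel

lemma key_aux2 {p q : ℕ} (Qp : Matrix (Fin q) (Fin p) ℝ)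
    (D : Matrix (Fin q) (Fin q) ℝ) (Ai Mi : Matrix (Fin p) (Fin p) ℝ)
    (hDt : Dᵀ = D) (hAit : Aiᵀ = Ai) (hMit : Miᵀ = Mi)
    (hA1 : Ai * (Qpᵀ * Qp) = 1) (hA3 : (Qpᵀ * Qp) * Ai = 1)
    (hM1 : Mi * (Qpᵀ * D * Qp) = 1) (hM3 : (Qpᵀ * D * Qp) * Mi = 1) :
    (D * Qp * Mi - Qp * Ai)ᵀ * (D * Qp * Mi - Qp * Ai)
      = Mi * (Qpᵀ * (D * D) * Qp) * Mi - Ai := by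
  have cA2 : Qpᵀ * (Qp * Ai) = 1 := by rw [← Matrix.mul_assoc, hA3]
  have cM : ∀ X : Matrix (Fin p) (Fin p) ℝ, Mi * (Qpᵀ * (D * (Qp * X))) = X := fun X => by
    rw [← Matrix.mul_assoc D Qp X, ← Matrix.mul_assoc Qpᵀ (D * Qp) X,
      ← Matrix.mul_assoc Qpᵀ D Qp, ← Matrix.mul_assoc, hM1, Matrix.one_mul]
  have cM2 : Qpᵀ * (D * (Qp * Mi)) = 1 := by
    rw [← Matrix.mul_assoc D Qp Mi, ← Matrix.mul_assoc Qpᵀ (D * Qp) Mi,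
      ← Matrix.mul_assoc Qpᵀ D Qp, hM3]
  simp only [Matrix.transpose_sub, Matrix.transpose_mul, hDt, hAit, hMit,
    Matrix.sub_mul, Matrix.mul_sub, Matrix.mul_assoc]
  rw [cM, cM2, cA2, Matrix.mul_one]
  abel

lemma trace_transpose_mul_self_pos {a b : ℕ} (R : Matrix (Fin a) (Fin b) ℝ) (hR : R ≠ 0) :
    0 < Matrix.trace (Rᵀ * R) := by
  obtain ⟨i, j, hij⟩ : ∃ i j, R i j ≠ 0 := by
    by_contra hcon
    push_neg at hcon
    exact hR (Matrix.ext fun i j => hcon i j)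
  have ht : Matrix.trace (Rᵀ * R) = ∑ j, ∑ i, R i j * R i j := by
    simp [Matrix.trace, Matrix.diag, Matrix.mul_apply]
  rw [ht]
  apply Finset.sum_pos'
  · intro k _
    exact Finset.sum_nonneg fun i _ => mul_self_nonneg _
  · refine ⟨j, Finset.mem_univ j, ?_⟩
    apply Finset.sum_pos'
    · intro k _; exact mul_self_nonneg _
    · exact ⟨i, Finset.mem_univ i, mul_self_pos.mpr hij⟩

/-- In the design setup: (i) if the identity
`(Q₊ᵀQ₊)⁻¹(Q₊ᵀD₊⁻¹Q₊)(Q₊ᵀQ₊)⁻¹ = (Q₊ᵀD₊Q₊)⁻¹` fails, then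
`I₀(ξ,P₀) > I₀(ξ,Iₙ)`; (ii) if
`λmax[(Q₊ᵀD₊Q₊)⁻¹(Q₊ᵀD₊²Q₊)(Q₊ᵀD₊Q₊)⁻¹] ≠ λmax[(Q₊ᵀQ₊)⁻¹]`, then
`I₁(ξ,Iₙ) > I₁(ξ,P₀)`. -/
theorem strict_loss_comparisons (N n p q : ℕ) (hp : 0 < p) (hpq : p ≤ q)
    (hqn : q ≤ n) (hqN : q ≤ N)
    (Q : Matrix (Fin N) (Fin p) ℝ) (hQ : Qᵀ * Q = 1)
    (J : Matrix (Fin n) (Fin N) ℝ)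
    (hJ : ∀ i, ∃ j₀, ∀ j, J i j = if j = j₀ then (1 : ℝ) else 0)
    (e : Fin q ↪ Fin N)
    (hsupp : ∀ j, j ∉ Set.range ⇑e → ∀ i, J i j = 0)
    (hpos : ∀ k, ∃ i, J i (e k) = 1)
    (Jp : Matrix (Fin n) (Fin q) ℝ) (hJp : ∀ i k, Jp i k = J i (e k))
    (Qp : Matrix (Fin q) (Fin p) ℝ) (hQp : ∀ k j, Qp k j = Q (e k) j)
    (Dp : Matrix (Fin q) (Fin q) ℝ) (hDp : Dp = Jpᵀ * Jp)
    (hQpQp : IsUnit (Qpᵀ * Qp).det)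
    (hQpDQp : IsUnit (Qpᵀ * Dp * Qp).det) :
    (¬((Qpᵀ * Qp)⁻¹ * (Qpᵀ * Dp⁻¹ * Qp) * (Qpᵀ * Qp)⁻¹ = (Qpᵀ * Dp * Qp)⁻¹) →
      Matrix.trace ((Qpᵀ * Dp * Qp)⁻¹)
        < Matrix.trace ((Qpᵀ * Qp)⁻¹ * (Qpᵀ * Dp⁻¹ * Qp) * (Qpᵀ * Qp)⁻¹)) ∧
    (lmax ((Qpᵀ * Dp * Qp)⁻¹ * (Qpᵀ * (Dp * Dp) * Qp) * (Qpᵀ * Dp * Qp)⁻¹)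
        ≠ lmax ((Qpᵀ * Qp)⁻¹) →
      lmax ((Qpᵀ * Qp)⁻¹)
        < lmax ((Qpᵀ * Dp * Qp)⁻¹ * (Qpᵀ * (Dp * Dp) * Qp) * (Qpᵀ * Dp * Qp)⁻¹)) := by
  -- diagonal structure of Dp
  set d : Fin q → ℝ := fun k => ∑ i, J i (e k) * J i (e k) with hd
  have hdiag : Dp = Matrix.diagonal d := by
    rw [hDp]
    ext k l
    rw [Matrix.mul_apply]
    by_cases hkl : k = l
    · subst hkl
      simp only [Matrix.diagonal_apply_eq, hd, Matrix.transpose_apply]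
      exact Finset.sum_congr rfl fun i _ => by rw [hJp]
    · rw [Matrix.diagonal_apply_ne _ hkl]
      apply Finset.sum_eq_zero
      intro i _
      obtain ⟨j₀, hj⟩ := hJ i
      have hekl : e k ≠ e l := fun h => hkl (e.injective h)
      rw [Matrix.transpose_apply, hJp, hJp, hj (e k), hj (e l)]
      by_cases h1 : e k = j₀ <;> by_cases h2 : e l = j₀ <;>
        simp_all
    
  have hd1 : ∀ k, (1:ℝ) ≤ d k := by
    intro k
    obtain ⟨i₀, hi₀⟩ := hpos k
    have h1 : J i₀ (e k) * J i₀ (e k) = 1 := by rw [hi₀]; ring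
    calc (1:ℝ) = J i₀ (e k) * J i₀ (e k) := h1.symm
      _ ≤ d k := Finset.single_le_sum (fun i _ => mul_self_nonneg (J i (e k)))
          (Finset.mem_univ i₀)
  have hdpos : ∀ k, (0:ℝ) < d k := fun k => lt_of_lt_of_le one_pos (hd1 k)
  have hdne : ∀ k, d k ≠ 0 := fun k => ne_of_gt (hdpos k)
  have hDinv : Dp⁻¹ = Matrix.diagonal (fun k => (d k)⁻¹) := by
    rw [hdiag]
    apply Matrix.inv_eq_right_inv
    rw [Matrix.diagonal_mul_diagonal]
    have : (fun k => d k * (d k)⁻¹) = fun _ => (1:ℝ) :=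
      funext fun k => mul_inv_cancel₀ (hdne k)
    rw [this, Matrix.diagonal_one]
  -- square roots
  set E : Matrix (Fin q) (Fin q) ℝ := Matrix.diagonal (fun k => Real.sqrt (d k)) with hE
  set F : Matrix (Fin q) (Fin q) ℝ := Matrix.diagonal (fun k => (Real.sqrt (d k))⁻¹) with hF
  have hsne : ∀ k, Real.sqrt (d k) ≠ 0 := fun k => ne_of_gt (Real.sqrt_pos.mpr (hdpos k))
  have hEF : E * F = 1 := by
    rw [hE, hF, Matrix.diagonal_mul_diagonal]
    have : (fun k => Real.sqrt (d k) * (Real.sqrt (d k))⁻¹) = fun _ => (1:ℝ) :=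
      funext fun k => mul_inv_cancel₀ (hsne k)
    rw [this, Matrix.diagonal_one]
  have hFE : F * E = 1 := by
    rw [hE, hF, Matrix.diagonal_mul_diagonal]
    have : (fun k => (Real.sqrt (d k))⁻¹ * Real.sqrt (d k)) = fun _ => (1:ℝ) :=
      funext fun k => inv_mul_cancel₀ (hsne k)
    rw [this, Matrix.diagonal_one]
  have hEE : E * E = Dp := by
    rw [hE, Matrix.diagonal_mul_diagonal, hdiag]
    exact congrArg Matrix.diagonal (funext fun k => Real.mul_self_sqrt (le_of_lt (hdpos k)))
  have hFF : F * F = Dp⁻¹ := by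
    rw [hF, Matrix.diagonal_mul_diagonal, hDinv]
    refine congrArg Matrix.diagonal (funext fun k => ?_)
    rw [← mul_inv, Real.mul_self_sqrt (le_of_lt (hdpos k))]
  have hEt : Eᵀ = E := Matrix.diagonal_transpose _
  have hFt : Fᵀ = F := Matrix.diagonal_transpose _
  have hDt : Dpᵀ = Dp := by rw [hdiag]; exact Matrix.diagonal_transpose _
  -- symmetry and inverses
  have hAt : (Qpᵀ * Qp)ᵀ = Qpᵀ * Qp := by
    rw [Matrix.transpose_mul, Matrix.transpose_transpose]
  have hMt : (Qpᵀ * Dp * Qp)ᵀ = Qpᵀ * Dp * Qp := by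
    rw [Matrix.transpose_mul, Matrix.transpose_mul, Matrix.transpose_transpose, hDt,
      Matrix.mul_assoc]
  have hAit : ((Qpᵀ * Qp)⁻¹)ᵀ = (Qpᵀ * Qp)⁻¹ := by
    rw [Matrix.transpose_nonsing_inv, hAt]
  have hMit : ((Qpᵀ * Dp * Qp)⁻¹)ᵀ = (Qpᵀ * Dp * Qp)⁻¹ := by
    rw [Matrix.transpose_nonsing_inv, hMt]
  have hAinv : (Qpᵀ * Qp)⁻¹ * (Qpᵀ * Qp) = 1 := Matrix.nonsing_inv_mul _ hQpQp
  have hAinv' : (Qpᵀ * Qp) * (Qpᵀ * Qp)⁻¹ = 1 := Matrix.mul_nonsing_inv _ hQpQp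
  have hMinv : (Qpᵀ * Dp * Qp)⁻¹ * (Qpᵀ * Dp * Qp) = 1 := Matrix.nonsing_inv_mul _ hQpDQp
  have hMinv' : (Qpᵀ * Dp * Qp) * (Qpᵀ * Dp * Qp)⁻¹ = 1 := Matrix.mul_nonsing_inv _ hQpDQp
  -- helper associativity
  have assoc1 : ∀ (X : Matrix (Fin p) (Fin p) ℝ) (Y Z : Matrix (Fin q) (Fin q) ℝ)
      (G : Matrix (Fin p) (Fin p) ℝ),
      (X * Qpᵀ * Y) * (Z * Qp * G) = X * (Qpᵀ * (Y * Z) * Qp) * G := by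
    intros; simp only [Matrix.mul_assoc]
  have assoc2 : ∀ (X : Matrix (Fin p) (Fin p) ℝ) (Y : Matrix (Fin q) (Fin q) ℝ)
      (G : Matrix (Fin p) (Fin p) ℝ),
      (X * Qpᵀ * Y) * (Qp * G) = X * (Qpᵀ * Y * Qp) * G := by
    intros; simp only [Matrix.mul_assoc]
  have assoc3 : ∀ (X : Matrix (Fin p) (Fin p) ℝ) (Y : Matrix (Fin q) (Fin q) ℝ)
      (G : Matrix (Fin p) (Fin p) ℝ),
      (X * Qpᵀ) * (Y * Qp * G) = X * (Qpᵀ * Y * Qp) * G := by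
    intros; simp only [Matrix.mul_assoc]
  have assoc4 : ∀ (X G : Matrix (Fin p) (Fin p) ℝ),
      (X * Qpᵀ) * (Qp * G) = X * (Qpᵀ * Qp) * G := by
    intros; simp only [Matrix.mul_assoc]
  constructor
  · -- part (i)
    intro hne
    set R₁ : Matrix (Fin q) (Fin p) ℝ :=
      F * Qp * (Qpᵀ * Qp)⁻¹ - E * Qp * (Qpᵀ * Dp * Qp)⁻¹ with hR₁
    have key₁ : R₁ᵀ * R₁ =
        (Qpᵀ * Qp)⁻¹ * (Qpᵀ * Dp⁻¹ * Qp) * (Qpᵀ * Qp)⁻¹ - (Qpᵀ * Dp * Qp)⁻¹ := by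
      rw [hR₁]
      exact key_aux1 Qp E F Dp Dp⁻¹ _ _ hFE hEF hEE hFF hEt hFt hAit hMit
        hAinv hAinv' hMinv hMinv'
    have hR₁ne : R₁ ≠ 0 := by
      intro h0
      apply hne
      have : R₁ᵀ * R₁ = 0 := by rw [h0]; simp
      rw [key₁] at this
      exact sub_eq_zero.mp this
    have htr := trace_transpose_mul_self_pos R₁ hR₁ne
    rw [key₁, Matrix.trace_sub] at htr
    linarith
  · -- part (ii)
    intro hne
    set R₂ : Matrix (Fin q) (Fin p) ℝ :=
      Dp * Qp * (Qpᵀ * Dp * Qp)⁻¹ - Qp * (Qpᵀ * Qp)⁻¹ with hR₂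
    have key₂ : R₂ᵀ * R₂ =
        (Qpᵀ * Dp * Qp)⁻¹ * (Qpᵀ * (Dp * Dp) * Qp) * (Qpᵀ * Dp * Qp)⁻¹ - (Qpᵀ * Qp)⁻¹ := by
      rw [hR₂]
      exact key_aux2 Qp Dp _ _ hDt hAit hMit hAinv hAinv' hMinv hMinv'
    -- hermitian facts
    have hherm : ∀ (X : Matrix (Fin p) (Fin p) ℝ), Xᵀ = X → X.IsHermitian := by
      intro X h
      have : Xᴴ = Xᵀ := by
        ext i j; simp [Matrix.conjTranspose_apply, Matrix.transpose_apply]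
      rw [Matrix.IsHermitian, this, h]
    have hLherm : ((Qpᵀ * Qp)⁻¹).IsHermitian := hherm _ hAit
    have hKherm : ((Qpᵀ * Dp * Qp)⁻¹ * (Qpᵀ * (Dp * Dp) * Qp) * (Qpᵀ * Dp * Qp)⁻¹).IsHermitian := by
      apply hherm
      simp only [Matrix.transpose_mul, Matrix.transpose_transpose, hDt, hMit]
      simp only [Matrix.mul_assoc]
    have hle : lmax ((Qpᵀ * Qp)⁻¹)
        ≤ lmax ((Qpᵀ * Dp * Qp)⁻¹ * (Qpᵀ * (Dp * Dp) * Qp) * (Qpᵀ * Dp * Qp)⁻¹) := by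
      apply lmax_le_lmax hp _ _ hLherm hKherm
      intro v
      have hKsum : (Qpᵀ * Dp * Qp)⁻¹ * (Qpᵀ * (Dp * Dp) * Qp) * (Qpᵀ * Dp * Qp)⁻¹
          = (Qpᵀ * Qp)⁻¹ + R₂ᵀ * R₂ := by rw [key₂]; abel
      rw [hKsum, Matrix.add_mulVec, dotProduct_add]
      have : 0 ≤ v ⬝ᵥ (R₂ᵀ * R₂) *ᵥ v := by
        rw [← Matrix.mulVec_mulVec, Matrix.dotProduct_mulVec, Matrix.vecMul_transpose]
        exact Finset.sum_nonneg fun i _ => mul_self_nonneg _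
      linarith
    exact lt_of_le_of_ne hle (Ne.symm hne)
end

section
/- In the design setup, suppose the design is uniform on its q support points: D₊ = k·I_q for an integer k ≥ 1 (so n = kq). Then for every ν ∈ [0,1] and every n×n symmetric positive definite matrix P with QᵀUQ invertible, I_ν(ξ, I_n) ≤ I_ν(ξ, P); i.e., P = I_n is a minimax precision matrix and ordinary least squares is minimax within the class of generalized least squares methods. Moreover, if P₀ = α·J₊D₊⁻²J₊ᵀ (α = n/tr(D₊⁻¹)) equals I_n, then q = n and D₊ = I_n, so the design is uniform on its support. -/
open Matrix

namespace OLSAux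

variable {m : ℕ}

lemma psd_dot {A : Matrix (Fin m) (Fin m) ℝ} (hA : A.PosSemidef) (v : Fin m → ℝ) :
    0 ≤ v ⬝ᵥ A *ᵥ v := by simpa using hA.dotProduct_mulVec_nonneg v

lemma trace_nonneg {A : Matrix (Fin m) (Fin m) ℝ} (hA : A.PosSemidef) : 0 ≤ A.trace := by
  rw [Matrix.trace]
  refine Finset.sum_nonneg fun i _ => ?_
  have := hA.dotProduct_mulVec_nonneg (Pi.single i 1)
  simpa [Matrix.mulVec_single, dotProduct, Pi.single_apply] using this

lemma psd_smul {A : Matrix (Fin m) (Fin m) ℝ} (hA : A.PosSemidef) {c : ℝ} (hc : 0 ≤ c) :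
    (c • A).PosSemidef := by
  refine Matrix.PosSemidef.of_dotProduct_mulVec_nonneg ?_ fun x => ?_
  · unfold Matrix.IsHermitian
    rw [conjTranspose_smul, hA.1.eq]
    simp
  · have := hA.dotProduct_mulVec_nonneg x
    simp only [smul_mulVec, dotProduct_smul, smul_eq_mul]
    exact mul_nonneg hc this

lemma dot_self_pos {v : Fin m → ℝ} (hv : v ≠ 0) : 0 < v ⬝ᵥ v := by
  have h1 : 0 ≤ v ⬝ᵥ v := Finset.sum_nonneg fun i _ => mul_self_nonneg _
  rcases h1.lt_or_eq with h | h
  · exact h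
  · exact absurd ((dotProduct_self_eq_zero).mp h.symm) hv

lemma psd_smul_one_sub {A : Matrix (Fin m) (Fin m) ℝ} (hA : A.IsHermitian) {c : ℝ}
    (hc : ∀ i, hA.eigenvalues i ≤ c) : (c • 1 - A).PosSemidef := by
  have hU := (Matrix.mem_unitaryGroup_iff).mp (hA.eigenvectorUnitary).2
  have h1 : (c • (1 : Matrix (Fin m) (Fin m) ℝ)) =
      (hA.eigenvectorUnitary : Matrix (Fin m) (Fin m) ℝ) * (c • 1)
        * star (hA.eigenvectorUnitary : Matrix (Fin m) (Fin m) ℝ) := by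
    rw [Matrix.mul_smul, mul_one, Matrix.smul_mul, hU]
  have hd : (Matrix.diagonal (fun i => c - hA.eigenvalues i) : Matrix (Fin m) (Fin m) ℝ)
      = c • 1 - Matrix.diagonal (RCLike.ofReal ∘ hA.eigenvalues) := by
    ext i j
    by_cases h : i = j <;>
      simp [Matrix.diagonal, Matrix.one_apply, h, Function.comp]
  have h2 : c • (1 : Matrix (Fin m) (Fin m) ℝ) - A =
      (hA.eigenvectorUnitary : Matrix (Fin m) (Fin m) ℝ)
        * (Matrix.diagonal (fun i => c - hA.eigenvalues i))
        * star (hA.eigenvectorUnitary : Matrix (Fin m) (Fin m) ℝ) := by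
    rw [hd, Matrix.mul_sub, Matrix.sub_mul, ← Unitary.conjStarAlgAut_apply (S := ℝ) (x := diagonal (RCLike.ofReal ∘ hA.eigenvalues)), ← hA.spectral_theorem, ← h1]
  rw [h2]
  have hd : (Matrix.diagonal (fun i => c - hA.eigenvalues i)).PosSemidef :=
    Matrix.posSemidef_diagonal_iff.mpr fun i => by simpa using hc i
  simpa [Matrix.star_eq_conjTranspose] using hd.mul_mul_conjTranspose_same
    (hA.eigenvectorUnitary : Matrix (Fin m) (Fin m) ℝ)

lemma dot_le {A : Matrix (Fin m) (Fin m) ℝ} (hA : A.IsHermitian) {c : ℝ}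
    (hc : ∀ i, hA.eigenvalues i ≤ c) (v : Fin m → ℝ) :
    v ⬝ᵥ A *ᵥ v ≤ c * (v ⬝ᵥ v) := by
  have := psd_dot (psd_smul_one_sub hA hc) v
  rw [Matrix.sub_mulVec, dotProduct_sub, Matrix.smul_mulVec, Matrix.one_mulVec,
    dotProduct_smul, smul_eq_mul] at this
  linarith

lemma mem_bound {A : Matrix (Fin m) (Fin m) ℝ} (hA : A.IsHermitian) {c : ℝ}
    (hc : ∀ i, hA.eigenvalues i ≤ c) {r : ℝ}
    (hr : r ∈ {r : ℝ | ∃ v : Fin m → ℝ, v ≠ 0 ∧ A.mulVec v = r • v}) : r ≤ c := by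
  obtain ⟨v, hv, hAv⟩ := hr
  have h1 : v ⬝ᵥ A *ᵥ v = r * (v ⬝ᵥ v) := by rw [hAv, dotProduct_smul, smul_eq_mul]
  have h2 := dot_le hA hc v
  have h3 := dot_self_pos hv
  nlinarith

lemma coe_basis_ne_zero {A : Matrix (Fin m) (Fin m) ℝ} (hA : A.IsHermitian) (i : Fin m) :
    ⇑(hA.eigenvectorBasis i) ≠ (0 : Fin m → ℝ) := by
  have := hA.eigenvectorBasis.orthonormal.ne_zero i
  intro h
  apply this
  ext j
  exact congrFun h j

lemma lmax_eig {A : Matrix (Fin m) (Fin m) ℝ} (hA : A.IsHermitian) {i0 : Fin m}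
    (hi0 : ∀ i, hA.eigenvalues i ≤ hA.eigenvalues i0) : lmax A = hA.eigenvalues i0 := by
  have hmem : hA.eigenvalues i0 ∈ {r : ℝ | ∃ v : Fin m → ℝ, v ≠ 0 ∧ A.mulVec v = r • v} :=
    ⟨_, coe_basis_ne_zero hA i0, hA.mulVec_eigenvectorBasis i0⟩
  refine le_antisymm (csSup_le ⟨_, hmem⟩ fun r hr => mem_bound hA hi0 hr) ?_
  exact le_csSup ⟨_, fun r hr => mem_bound hA hi0 hr⟩ hmem

lemma lmax_mono (hm : 0 < m) {A B : Matrix (Fin m) (Fin m) ℝ}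
    (hA : A.IsHermitian) (hB : B.IsHermitian) (hAB : (A - B).PosSemidef) :
    lmax B ≤ lmax A := by
  haveI : Nonempty (Fin m) := ⟨⟨0, hm⟩⟩
  obtain ⟨iA, hiA⟩ := Finite.exists_max hA.eigenvalues
  obtain ⟨iB, hiB⟩ := Finite.exists_max hB.eigenvalues
  rw [lmax_eig hA hiA, lmax_eig hB hiB]
  set v := ⇑(hB.eigenvectorBasis iB) with hv
  have hvne := coe_basis_ne_zero hB iB
  have h1 : v ⬝ᵥ B *ᵥ v = hB.eigenvalues iB * (v ⬝ᵥ v) := by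
    rw [hB.mulVec_eigenvectorBasis iB, dotProduct_smul, smul_eq_mul]
  have h2 : v ⬝ᵥ B *ᵥ v ≤ v ⬝ᵥ A *ᵥ v := by
    have := psd_dot hAB v
    rw [Matrix.sub_mulVec, dotProduct_sub] at this
    linarith
  have h3 := dot_le hA hiA v
  have h4 := dot_self_pos hvne
  nlinarith

lemma gauss_markov {n p : ℕ} (T : Matrix (Fin n) (Fin p) ℝ) (L : Matrix (Fin p) (Fin n) ℝ)
    (hdet : IsUnit (Tᵀ * T).det) (hLT : L * T = 1) :
    (L * Lᵀ - (Tᵀ * T)⁻¹).PosSemidef := by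
  have hsym : (Tᵀ * T)ᵀ = Tᵀ * T := by rw [Matrix.transpose_mul, Matrix.transpose_transpose]
  have hinv_sym : ((Tᵀ * T)⁻¹)ᵀ = (Tᵀ * T)⁻¹ := by
    rw [Matrix.transpose_nonsing_inv, hsym]
  set E := L - (Tᵀ * T)⁻¹ * Tᵀ with hE
  have key : L * Lᵀ - (Tᵀ * T)⁻¹ = E * Eᵀ := by
    have h1 : (Tᵀ * T)⁻¹ * (Tᵀ * T) = 1 := Matrix.nonsing_inv_mul _ hdet
    have h2 : Tᵀ * Lᵀ = 1 := by
      have := congrArg Matrix.transpose hLT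
      rwa [Matrix.transpose_mul, Matrix.transpose_one] at this
    have e1 : L * (T * (Tᵀ * T)⁻¹) = (Tᵀ * T)⁻¹ := by
      rw [← Matrix.mul_assoc, hLT, Matrix.one_mul]
    have e2 : (Tᵀ * T)⁻¹ * Tᵀ * Lᵀ = (Tᵀ * T)⁻¹ := by
      rw [Matrix.mul_assoc, h2, Matrix.mul_one]
    have e3 : (Tᵀ * T)⁻¹ * Tᵀ * (T * (Tᵀ * T)⁻¹) = (Tᵀ * T)⁻¹ := by
      rw [Matrix.mul_assoc, ← Matrix.mul_assoc Tᵀ, ← Matrix.mul_assoc, h1, Matrix.one_mul]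
    rw [hE, Matrix.transpose_sub, Matrix.transpose_mul, hinv_sym, Matrix.transpose_transpose,
      Matrix.sub_mul, Matrix.mul_sub, Matrix.mul_sub, e1, e2, e3]
    abel
  rw [key]
  have : Eᵀ = Eᴴ := by
    ext i j; simp [Matrix.conjTranspose_apply]
  rw [this]
  exact Matrix.posSemidef_self_mul_conjTranspose E



lemma conjT_eq_T {a b : Type*} [Fintype a] [Fintype b] (A : Matrix a b ℝ) : Aᴴ = Aᵀ := by
  ext i j; simp [Matrix.conjTranspose_apply]

lemma herm_of_transpose {a : Type*} [Fintype a] {A : Matrix a a ℝ} (h : Aᵀ = A) :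
    A.IsHermitian := by
  show Aᴴ = A
  rw [conjT_eq_T, h]

end OLSAux

/-- If the design is uniform on its `q` support points
(`D₊ = k·I_q`, `n = kq`), then for every `ν ∈ [0,1]` and every symmetric
positive definite `P`, `I_ν(ξ,Iₙ) ≤ I_ν(ξ,P)`: `P = Iₙ` is a minimax precision
matrix, i.e. OLS is minimax among GLS methods. Moreover if
`P₀ = α·J₊D₊⁻²J₊ᵀ = Iₙ` then `q = n` and `D₊ = I`, so the design is uniform on
its support. -/
theorem uniform_design_ols_minimax (N n p q : ℕ) (hp : 0 < p) (hpq : p ≤ q)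
    (hqn : q ≤ n) (hqN : q ≤ N)
    (Q : Matrix (Fin N) (Fin p) ℝ) (hQ : Qᵀ * Q = 1)
    (J : Matrix (Fin n) (Fin N) ℝ)
    (hJ : ∀ i, ∃ j₀, ∀ j, J i j = if j = j₀ then (1 : ℝ) else 0)
    (e : Fin q ↪ Fin N)
    (hsupp : ∀ j, j ∉ Set.range ⇑e → ∀ i, J i j = 0)
    (hpos : ∀ k, ∃ i, J i (e k) = 1)
    (Jp : Matrix (Fin n) (Fin q) ℝ) (hJp : ∀ i k, Jp i k = J i (e k))
    (Qp : Matrix (Fin q) (Fin p) ℝ) (hQp : ∀ k j, Qp k j = Q (e k) j)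
    (Dp : Matrix (Fin q) (Fin q) ℝ) (hDp : Dp = Jpᵀ * Jp)
    (hQpQp : IsUnit (Qpᵀ * Qp).det)
    (k : ℕ) (hk : 1 ≤ k) (hn : n = k * q)
    (hunif : Dp = (k : ℝ) • (1 : Matrix (Fin q) (Fin q) ℝ))
    (I0f I1f : Matrix (Fin n) (Fin n) ℝ → ℝ)
    (hI0f : ∀ P : Matrix (Fin n) (Fin n) ℝ, I0f P =
      Matrix.trace ((Qᵀ * (Jᵀ * P * J) * Q)⁻¹ * (Qᵀ * (Jᵀ * P * P * J) * Q)
        * (Qᵀ * (Jᵀ * P * J) * Q)⁻¹))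
    (hI1f : ∀ P : Matrix (Fin n) (Fin n) ℝ, I1f P =
      lmax ((Qᵀ * (Jᵀ * P * J) * Q)⁻¹ * (Qᵀ * ((Jᵀ * P * J) * (Jᵀ * P * J)) * Q)
        * (Qᵀ * (Jᵀ * P * J) * Q)⁻¹)) :
    (∀ ν : ℝ, ν ∈ Set.Icc (0 : ℝ) 1 →
      ∀ P : Matrix (Fin n) (Fin n) ℝ, P.PosDef →
        IsUnit (Qᵀ * (Jᵀ * P * J) * Q).det →
        (1 - ν) * I0f 1 + ν * I1f 1 ≤ (1 - ν) * I0f P + ν * I1f P) ∧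
    (∀ (α : ℝ) (P₀ : Matrix (Fin n) (Fin n) ℝ),
      α = (n : ℝ) / Matrix.trace Dp⁻¹ →
      P₀ = α • (Jp * (Dp⁻¹ * Dp⁻¹) * Jpᵀ) →
      P₀ = 1 → q = n ∧ Dp = 1) := by
  have hk0 : (k : ℝ) ≠ 0 := by
    have : 0 < k := hk
    exact_mod_cast this.ne'
  have hknn : (0:ℝ) ≤ (k:ℝ) := Nat.cast_nonneg k
  have hDpJ : Jpᵀ * Jp = (k : ℝ) • 1 := by rw [← hDp]; exact hunif
  -- sums over the support
  have sum_supp : ∀ g : Fin N → ℝ, (∀ l, l ∉ Set.range ⇑e → g l = 0) →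
      ∑ l, g l = ∑ kk, g (e kk) := by
    intro g hg
    rw [← Finset.sum_map Finset.univ e g]
    symm
    apply Finset.sum_subset (Finset.subset_univ _)
    intro x _ hx
    apply hg
    intro hmem
    apply hx
    obtain ⟨kk, hkk⟩ := hmem
    exact Finset.mem_map.mpr ⟨kk, Finset.mem_univ _, hkk⟩
  have hJQ : J * Q = Jp * Qp := by
    ext i j
    rw [Matrix.mul_apply, Matrix.mul_apply,
      sum_supp (fun l => J i l * Q l j)
        (fun l hl => by show J i l * Q l j = 0; rw [hsupp l hl i, zero_mul])]
    refine Finset.sum_congr rfl fun kk _ => ?_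
    show J i (e kk) * Q (e kk) j = Jp i kk * Qp kk j
    rw [hJp, hQp]
  have hJJT : J * Jᵀ = Jp * Jpᵀ := by
    ext i i'
    rw [Matrix.mul_apply, Matrix.mul_apply,
      sum_supp (fun l => J i l * Jᵀ l i')
        (fun l hl => by show J i l * Jᵀ l i' = 0; rw [hsupp l hl i, zero_mul])]
    refine Finset.sum_congr rfl fun kk _ => ?_
    show J i (e kk) * Jᵀ (e kk) i' = Jp i kk * Jpᵀ kk i'
    rw [Matrix.transpose_apply, Matrix.transpose_apply, hJp, hJp]
  have hJp2 : (Jp * Jpᵀ) * (Jp * Jpᵀ) = (k : ℝ) • (Jp * Jpᵀ) := by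
    calc (Jp * Jpᵀ) * (Jp * Jpᵀ) = Jp * ((Jpᵀ * Jp) * Jpᵀ) := by
          simp only [Matrix.mul_assoc]
    _ = (k : ℝ) • (Jp * Jpᵀ) := by
          rw [hDpJ, Matrix.smul_mul, Matrix.one_mul, Matrix.mul_smul]
  obtain ⟨T, hT⟩ : ∃ T : Matrix (Fin n) (Fin p) ℝ, T = J * Q := ⟨_, rfl⟩
  have hTJp : T = Jp * Qp := hT.trans hJQ
  have hform : ∀ P : Matrix (Fin n) (Fin n) ℝ, Qᵀ * (Jᵀ * P * J) * Q = Tᵀ * P * T := by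
    intro P; rw [hT]; simp only [Matrix.transpose_mul, Matrix.mul_assoc]
  have hform2 : ∀ P : Matrix (Fin n) (Fin n) ℝ,
      Qᵀ * (Jᵀ * P * P * J) * Q = Tᵀ * P * P * T := by
    intro P; rw [hT]; simp only [Matrix.transpose_mul, Matrix.mul_assoc]
  have hform3 : ∀ P : Matrix (Fin n) (Fin n) ℝ,
      Qᵀ * ((Jᵀ * P * J) * (Jᵀ * P * J)) * Q = Tᵀ * P * (J * Jᵀ) * P * T := by
    intro P; rw [hT]; simp only [Matrix.transpose_mul, Matrix.mul_assoc]
  have hJJT_T : (J * Jᵀ) * T = (k : ℝ) • T := by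
    rw [hJJT, hTJp]
    calc (Jp * Jpᵀ) * (Jp * Qp) = Jp * ((Jpᵀ * Jp) * Qp) := by simp only [Matrix.mul_assoc]
    _ = (k : ℝ) • (Jp * Qp) := by
          rw [hDpJ, Matrix.smul_mul, Matrix.one_mul, Matrix.mul_smul]
  have hTT : Tᵀ * T = (k : ℝ) • (Qpᵀ * Qp) := by
    rw [hTJp, Matrix.transpose_mul]
    calc Qpᵀ * Jpᵀ * (Jp * Qp) = Qpᵀ * ((Jpᵀ * Jp) * Qp) := by simp only [Matrix.mul_assoc]
    _ = (k : ℝ) • (Qpᵀ * Qp) := by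
          rw [hDpJ, Matrix.smul_mul, Matrix.one_mul, Matrix.mul_smul]
  have hTTdet : IsUnit (Tᵀ * T).det := by
    rw [hTT, Matrix.det_smul]
    exact (isUnit_iff_ne_zero.mpr (pow_ne_zero _ hk0)).mul hQpQp
  have hTTsym : (Tᵀ * T)ᵀ = Tᵀ * T := by
    rw [Matrix.transpose_mul, Matrix.transpose_transpose]
  have hTTinv_sym : ((Tᵀ * T)⁻¹)ᵀ = (Tᵀ * T)⁻¹ := by
    rw [Matrix.transpose_nonsing_inv, hTTsym]
  constructor
  · intro ν hν P hP hXdet0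
    have hPt : Pᵀ = P := by
      rw [← OLSAux.conjT_eq_T]
      exact hP.1
    have hXdet : IsUnit (Tᵀ * P * T).det := by rwa [hform P] at hXdet0
    have hXt : (Tᵀ * P * T)ᵀ = Tᵀ * P * T := by
      rw [Matrix.transpose_mul, Matrix.transpose_mul, Matrix.transpose_transpose, hPt,
        Matrix.mul_assoc]
    have hXinvT : ((Tᵀ * P * T)⁻¹)ᵀ = (Tᵀ * P * T)⁻¹ := by
      rw [Matrix.transpose_nonsing_inv, hXt]
    obtain ⟨L, hL⟩ : ∃ L : Matrix (Fin p) (Fin n) ℝ, L = (Tᵀ * P * T)⁻¹ * Tᵀ * P := ⟨_, rfl⟩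
    have hLT : L * T = 1 := by
      have h : L * T = (Tᵀ * P * T)⁻¹ * (Tᵀ * P * T) := by
        rw [hL]; simp only [Matrix.mul_assoc]
      rw [h, Matrix.nonsing_inv_mul _ hXdet]
    have hLt : Lᵀ = P * T * (Tᵀ * P * T)⁻¹ := by
      rw [hL, Matrix.transpose_mul, Matrix.transpose_mul, Matrix.transpose_transpose, hPt,
        hXinvT]
      simp only [Matrix.mul_assoc]
    -- values at P = 1
    have hI01 : I0f 1 = Matrix.trace (Tᵀ * T)⁻¹ := by
      rw [hI0f, hform 1, hform2 1, Matrix.mul_one, Matrix.mul_one,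
        Matrix.nonsing_inv_mul _ hTTdet, Matrix.one_mul]
    have hI11 : I1f 1 = lmax ((k : ℝ) • (Tᵀ * T)⁻¹) := by
      rw [hI1f, hform 1, hform3 1, Matrix.mul_one, Matrix.mul_one]
      congr 1
      have hmid : Tᵀ * (J * Jᵀ) * T = (k : ℝ) • (Tᵀ * T) := by
        rw [Matrix.mul_assoc, hJJT_T, Matrix.mul_smul]
      rw [hmid, Matrix.mul_smul, Matrix.smul_mul,
        Matrix.nonsing_inv_mul _ hTTdet, Matrix.one_mul]
    -- values at P
    have hI0P : I0f P = Matrix.trace (L * Lᵀ) := by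
      rw [hI0f, hform P, hform2 P]
      congr 1
      rw [hLt, hL]
      simp only [Matrix.mul_assoc]
    have hI1P : I1f P = lmax (L * (J * Jᵀ) * Lᵀ) := by
      rw [hI1f, hform P, hform3 P]
      congr 1
      rw [hLt, hL]
      simp only [Matrix.mul_assoc]
    -- I0 comparison
    have hGM := OLSAux.gauss_markov T L hTTdet hLT
    have h0 : I0f 1 ≤ I0f P := by
      rw [hI01, hI0P]
      have h := OLSAux.trace_nonneg hGM
      rw [Matrix.trace_sub] at h
      linarith
    -- I1 comparison
    have hJJ2 : (J * Jᵀ) * (J * Jᵀ) = (k : ℝ) • (J * Jᵀ) := by rw [hJJT]; exact hJp2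
    have hJJsym : (J * Jᵀ)ᵀ = J * Jᵀ := by
      rw [Matrix.transpose_mul, Matrix.transpose_transpose]
    have hWWt : (L * (J * Jᵀ)) * (L * (J * Jᵀ))ᵀ = (k : ℝ) • (L * (J * Jᵀ) * Lᵀ) := by
      rw [Matrix.transpose_mul, hJJsym]
      calc (L * (J * Jᵀ)) * ((J * Jᵀ) * Lᵀ) = L * ((J * Jᵀ) * (J * Jᵀ)) * Lᵀ := by
            simp only [Matrix.mul_assoc]
      _ = (k : ℝ) • (L * (J * Jᵀ) * Lᵀ) := by
            rw [hJJ2, Matrix.mul_smul, Matrix.smul_mul]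
    obtain ⟨L', hL'⟩ : ∃ L' : Matrix (Fin p) (Fin n) ℝ, L' = (k : ℝ)⁻¹ • (L * (J * Jᵀ)) := ⟨_, rfl⟩
    have hL'T : L' * T = 1 := by
      rw [hL', Matrix.smul_mul, Matrix.mul_assoc, hJJT_T, Matrix.mul_smul, hLT, smul_smul,
        inv_mul_cancel₀ hk0, one_smul]
    have hL'L' : L' * L'ᵀ = (k : ℝ)⁻¹ • (L * (J * Jᵀ) * Lᵀ) := by
      rw [hL', Matrix.transpose_smul, Matrix.smul_mul, Matrix.mul_smul, hWWt, smul_smul,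
        smul_smul]
      congr 1
      field_simp
    have hMP : L * (J * Jᵀ) * Lᵀ = (k : ℝ) • (L' * L'ᵀ) := by
      rw [hL'L', smul_smul, mul_inv_cancel₀ hk0, one_smul]
    have hGM' := OLSAux.gauss_markov T L' hTTdet hL'T
    have hdiff : ((L * (J * Jᵀ) * Lᵀ) - (k : ℝ) • (Tᵀ * T)⁻¹).PosSemidef := by
      have : (L * (J * Jᵀ) * Lᵀ) - (k : ℝ) • (Tᵀ * T)⁻¹
          = (k : ℝ) • (L' * L'ᵀ - (Tᵀ * T)⁻¹) := by
        rw [hMP, smul_sub]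
      rw [this]
      exact OLSAux.psd_smul hGM' hknn
    have hherm1 : ((k : ℝ) • (Tᵀ * T)⁻¹).IsHermitian :=
      OLSAux.herm_of_transpose (by rw [Matrix.transpose_smul, hTTinv_sym])
    have hherm2 : (L * (J * Jᵀ) * Lᵀ).IsHermitian := by
      refine OLSAux.herm_of_transpose ?_
      simp only [Matrix.transpose_mul, Matrix.transpose_transpose, Matrix.mul_assoc]
    have h1 : I1f 1 ≤ I1f P := by
      rw [hI11, hI1P]
      exact OLSAux.lmax_mono hp hherm2 hherm1 hdiff
    obtain ⟨hν0, hν1⟩ := hν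
    have hc0 : (0:ℝ) ≤ 1 - ν := by linarith
    exact add_le_add (mul_le_mul_of_nonneg_left h0 hc0) (mul_le_mul_of_nonneg_left h1 hν0)
  · intro α P₀ hα hP₀ hP1
    have hq0 : 0 < q := lt_of_lt_of_le hp hpq
    have hn0 : 0 < n := hn ▸ Nat.mul_pos hk hq0
    have hq0' : (q : ℝ) ≠ 0 := by exact_mod_cast hq0.ne'
    have hDpinv : Dp⁻¹ = (k : ℝ)⁻¹ • 1 := by
      apply Matrix.inv_eq_right_inv
      rw [hunif, Matrix.smul_mul, Matrix.mul_smul, Matrix.one_mul, smul_smul,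
        mul_inv_cancel₀ hk0, one_smul]
    have htr : Matrix.trace Dp⁻¹ = (k : ℝ)⁻¹ * (q : ℝ) := by
      rw [hDpinv, Matrix.trace_smul, Matrix.trace_one]
      simp [Fintype.card_fin]
    have hα2 : α = (k : ℝ) ^ 2 := by
      rw [hα, htr, hn]
      push_cast
      field_simp
    have hP₀' : P₀ = Jp * Jpᵀ := by
      rw [hP₀, hDpinv, hα2]
      have h1 : ((k : ℝ)⁻¹ • (1 : Matrix (Fin q) (Fin q) ℝ)) * ((k : ℝ)⁻¹ • 1)
          = ((k : ℝ)⁻¹ * (k : ℝ)⁻¹) • 1 := by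
        rw [Matrix.smul_mul, Matrix.mul_smul, Matrix.one_mul, smul_smul]
      rw [h1, Matrix.mul_smul, Matrix.mul_one, Matrix.smul_mul, smul_smul]
      have h2 : (k : ℝ) ^ 2 * ((k : ℝ)⁻¹ * (k : ℝ)⁻¹) = 1 := by field_simp
      rw [h2, one_smul]
    have hJJ1 : Jp * Jpᵀ = 1 := by rw [← hP₀', hP1]
    have hk1 : (k : ℝ) = 1 := by
      have h2 : (1 : Matrix (Fin n) (Fin n) ℝ) = (k : ℝ) • 1 := by
        calc (1 : Matrix (Fin n) (Fin n) ℝ) = (Jp * Jpᵀ) * (Jp * Jpᵀ) := by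
              rw [hJJ1, Matrix.one_mul]
        _ = (k : ℝ) • (Jp * Jpᵀ) := hJp2
        _ = (k : ℝ) • 1 := by rw [hJJ1]
      have h3 := congrFun (congrFun h2 ⟨0, hn0⟩) ⟨0, hn0⟩
      simpa [Matrix.one_apply] using h3.symm
    have hkn : k = 1 := by exact_mod_cast hk1
    refine ⟨by rw [hn, hkn, one_mul], ?_⟩
    rw [hunif, hk1, one_smul]
end
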